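/- arXiv:2006.10365 — 4 statements merged into one kernel-verified Lean document; each statement's English description precedes it below -/
import Mathlib

section
/- Let L and R be nonempty finite sets of points in the plane that are strictly separated by a line, and let r > 0. If the boundaries of I_r(L) and I_r(R) are circles' arcs boundaries of convex regions, then the boundary circles ∂I_r(L) and ∂I_r(R) intersect in at most two points, provided neither region is contained in the other and both are nonempty. Formally: for any two distinct points p, q in ∂I_r(L) ∩ ∂I_r(R) (as boundaries of the convex sets), every point of ∂I_r(L) ∩ ∂I_r(R) is p or q — under the assumption that I_r(L) ⊄ I_r(R) and I_r(R) ⊄ I_r(L). -/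
open Metric

section Aux

open RealInnerProductSpace

variable {E : Type*} [NormedAddCommGroup E] [InnerProductSpace ℝ E]

private lemma half_sq_le_inner_of_dist_le {r : ℝ} {x z : E} (hx : ‖x‖ = r) (h : dist x z ≤ r) :
    ‖z‖ ^ 2 / 2 ≤ ⟪x, z⟫ := by
  have h0 : (0:ℝ) ≤ dist x z := dist_nonneg
  have h2 : ‖x - z‖ ^ 2 ≤ r ^ 2 := by
    rw [← dist_eq_norm]
    nlinarith
  have h3 : ‖x - z‖ ^ 2 = ‖x‖ ^ 2 - 2 * ⟪x, z⟫ + ‖z‖ ^ 2 := norm_sub_sq_real x z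
  nlinarith

private lemma dist_lt_of_half_sq_lt_inner {r : ℝ} (hr : 0 < r) {c z : E} (hc : ‖c‖ = r)
    (h : ‖z‖ ^ 2 / 2 < ⟪c, z⟫) : dist c z < r := by
  have h3 : ‖c - z‖ ^ 2 = ‖c‖ ^ 2 - 2 * ⟪c, z⟫ + ‖z‖ ^ 2 := norm_sub_sq_real c z
  have h2 : ‖c - z‖ ^ 2 < r ^ 2 := by nlinarith
  rw [dist_eq_norm]
  exact lt_of_pow_lt_pow_left₀ 2 hr.le h2

set_option maxHeartbeats 1000000 in
private lemma key_centered {r : ℝ} (hr : 0 < r) (z₁ z₂ x y : E) (f : E →L[ℝ] ℝ) (a : ℝ)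
    (hz₁ : z₁ ≠ 0) (hz₂ : z₂ ≠ 0)
    (hx0 : ‖x‖ = r) (hy0 : ‖y‖ = r)
    (hx1 : dist x z₁ ≤ r) (hx2 : dist x z₂ ≤ r)
    (hy1 : dist y z₁ ≤ r) (hy2 : dist y z₂ ≤ r)
    (hfx : f x < a) (hfy : a < f y) :
    ∃ c : E, ‖c‖ = r ∧ dist c z₁ < r ∧ dist c z₂ < r ∧ f c = a := by
  have hxy : x ≠ y := by
    intro h
    rw [h] at hfx
    exact absurd hfx (not_lt.2 hfy.le)
  have hβ₁ : 0 < ‖z₁‖ ^ 2 / 2 := by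
    have : 0 < ‖z₁‖ := norm_pos_iff.2 hz₁
    positivity
  have hβ₂ : 0 < ‖z₂‖ ^ 2 / 2 := by
    have : 0 < ‖z₂‖ := norm_pos_iff.2 hz₂
    positivity
  set m : ℝ → E := fun t => (1 - t) • x + t • y with hm
  have hinner : ∀ t ∈ Set.Icc (0:ℝ) 1, ∀ z' : E,
      ‖z'‖ ^ 2 / 2 ≤ ⟪x, z'⟫ → ‖z'‖ ^ 2 / 2 ≤ ⟪y, z'⟫ → ‖z'‖ ^ 2 / 2 ≤ ⟪m t, z'⟫ := by
    intro t ht z' hxz hyz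
    have : ⟪m t, z'⟫ = (1 - t) * ⟪x, z'⟫ + t * ⟪y, z'⟫ := by
      simp [hm, inner_add_left, real_inner_smul_left]
    rw [this]
    obtain ⟨ht0, ht1⟩ := ht
    nlinarith
  have hx1' := half_sq_le_inner_of_dist_le hx0 hx1
  have hx2' := half_sq_le_inner_of_dist_le hx0 hx2
  have hy1' := half_sq_le_inner_of_dist_le hy0 hy1
  have hy2' := half_sq_le_inner_of_dist_le hy0 hy2
  have hm_ne : ∀ t ∈ Set.Icc (0:ℝ) 1, m t ≠ 0 := by
    intro t ht h0
    have h1 := hinner t ht z₁ hx1' hy1'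
    rw [h0, inner_zero_left] at h1
    linarith
  have hmc : Continuous m := by fun_prop
  set c : ℝ → E := fun t => (r / ‖m t‖) • m t with hcdef
  have hccont : ContinuousOn c (Set.Icc (0:ℝ) 1) := by
    apply ContinuousOn.smul
    · exact continuousOn_const.div hmc.norm.continuousOn
        (fun t ht => norm_ne_zero_iff.2 (hm_ne t ht))
    · exact hmc.continuousOn
  set g : ℝ → ℝ := fun t => f (c t) with hgdef
  have hgcont : ContinuousOn g (Set.Icc (0:ℝ) 1) := f.continuous.comp_continuousOn hccont
  have hm0 : m 0 = x := by simp [hm]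
  have hm1 : m 1 = y := by simp [hm]
  have hg0 : g 0 = f x := by
    simp only [hgdef, hcdef, hm0, hx0]
    rw [div_self hr.ne', one_smul]
  have hg1 : g 1 = f y := by
    simp only [hgdef, hcdef, hm1, hy0]
    rw [div_self hr.ne', one_smul]
  have hmem : a ∈ Set.Icc (g 0) (g 1) := by
    rw [hg0, hg1]
    exact ⟨hfx.le, hfy.le⟩
  obtain ⟨t₀, ht₀, hgt₀⟩ := intermediate_value_Icc (by norm_num) hgcont hmem
  have ht₀0 : t₀ ≠ 0 := by
    intro h
    rw [h, hg0] at hgt₀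
    exact absurd hgt₀ hfx.ne
  have ht₀1 : t₀ ≠ 1 := by
    intro h
    rw [h, hg1] at hgt₀
    exact absurd hgt₀ hfy.ne'
  have ht₀0' : 0 < t₀ := lt_of_le_of_ne ht₀.1 (Ne.symm ht₀0)
  have ht₀1' : t₀ < 1 := lt_of_le_of_ne ht₀.2 ht₀1
  have hmlt : ‖m t₀‖ < r :=
    norm_combo_lt_of_ne hx0.le hy0.le hxy (by linarith) ht₀0' (by ring)
  have hmpos : 0 < ‖m t₀‖ := norm_pos_iff.2 (hm_ne t₀ ht₀)
  have hfac : 1 < r / ‖m t₀‖ := (one_lt_div hmpos).2 hmlt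
  have hcnorm : ‖c t₀‖ = r := by
    simp only [hcdef, norm_smul, Real.norm_eq_abs]
    rw [abs_of_pos (div_pos hr hmpos), div_mul_cancel₀ _ hmpos.ne']
  have hcinner : ∀ z' : E, 0 < ‖z'‖ ^ 2 / 2 → ‖z'‖ ^ 2 / 2 ≤ ⟪m t₀, z'⟫ →
      ‖z'‖ ^ 2 / 2 < ⟪c t₀, z'⟫ := by
    intro z' hβ hmi
    have : ⟪c t₀, z'⟫ = (r / ‖m t₀‖) * ⟪m t₀, z'⟫ := real_inner_smul_left _ _ _
    rw [this]
    nlinarith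
  refine ⟨c t₀, hcnorm, ?_, ?_, hgt₀⟩
  · exact dist_lt_of_half_sq_lt_inner hr hcnorm
      (hcinner z₁ hβ₁ (hinner t₀ ht₀ z₁ hx1' hy1'))
  · exact dist_lt_of_half_sq_lt_inner hr hcnorm
      (hcinner z₂ hβ₂ (hinner t₀ ht₀ z₂ hx2' hy2'))

private lemma key (r : ℝ) (hr : 0 < r) (w w₁ w₂ xx yy : E) (f : E →L[ℝ] ℝ) (a : ℝ)
    (hw₁ : w₁ ≠ w) (hw₂ : w₂ ≠ w)
    (hx0 : dist w xx = r) (hy0 : dist w yy = r)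
    (hx1 : dist w₁ xx ≤ r) (hx2 : dist w₂ xx ≤ r)
    (hy1 : dist w₁ yy ≤ r) (hy2 : dist w₂ yy ≤ r)
    (hfx : f xx < a) (hfy : a < f yy) :
    ∃ c : E, dist c w = r ∧ dist c w₁ < r ∧ dist c w₂ < r ∧ f c = a := by
  obtain ⟨c', hc0, hc1, hc2, hcf⟩ := key_centered hr (w₁ - w) (w₂ - w) (xx - w) (yy - w) f
    (a - f w) (sub_ne_zero.2 hw₁) (sub_ne_zero.2 hw₂)
    (by rw [← dist_eq_norm, dist_comm]; exact hx0)
    (by rw [← dist_eq_norm, dist_comm]; exact hy0)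
    (by rw [dist_sub_right, dist_comm]; exact hx1)
    (by rw [dist_sub_right, dist_comm]; exact hx2)
    (by rw [dist_sub_right, dist_comm]; exact hy1)
    (by rw [dist_sub_right, dist_comm]; exact hy2)
    (by rw [map_sub]; linarith)
    (by rw [map_sub]; linarith)
  refine ⟨c' + w, ?_, ?_, ?_, ?_⟩
  · rw [dist_eq_norm]
    simpa using hc0
  · have h : c' + w - w₁ = c' - (w₁ - w) := by abel
    rw [dist_eq_norm, h, ← dist_eq_norm]
    exact hc1
  · have h : c' + w - w₂ = c' - (w₂ - w) := by abel
    rw [dist_eq_norm, h, ← dist_eq_norm]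
    exact hc2
  · rw [map_add]
    linarith [hcf]

private lemma middle_contra {r : ℝ} {u v w μ : E} (hu : dist u w ≤ r) (hv : dist v w ≤ r)
    (hμ : dist μ w = r) {t : ℝ} (ht0 : 0 < t) (ht1 : t < 1)
    (heq : μ = (1 - t) • u + t • v) (huv : u ≠ v) : False := by
  have h1 : μ - w = (1 - t) • (u - w) + t • (v - w) := by
    rw [heq]
    match_scalars <;> ring
  have h2 : ‖μ - w‖ < r := by
    rw [h1]
    refine norm_combo_lt_of_ne ?_ ?_ ?_ (by linarith) ht0 (by ring)
    · rw [← dist_eq_norm]; exact hu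
    · rw [← dist_eq_norm]; exact hv
    · intro h
      exact huv (by
        have := sub_left_injective h
        exact this)
  rw [← dist_eq_norm, hμ] at h2
  exact absurd h2 (lt_irrefl r)

private lemma frontier_witness (L : Finset E) (r : ℝ) (IL : Set E)
    (hIL : IL = ⋂ x ∈ L, closedBall x r) {w : E} (hw : w ∈ frontier IL) :
    w ∈ IL ∧ ∃ x ∈ L, dist w x = r := by
  have hclosed : IsClosed IL := by
    rw [hIL]
    exact isClosed_biInter (fun x _ => isClosed_closedBall)
  have hwIL : w ∈ IL := by
    have h1 : w ∈ closure IL := frontier_subset_closure hw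
    rwa [hclosed.closure_eq] at h1
  have hle : ∀ x ∈ L, dist w x ≤ r := by
    intro x hx
    have h1 := hwIL
    rw [hIL] at h1
    exact mem_closedBall.1 (Set.mem_iInter₂.1 h1 x hx)
  refine ⟨hwIL, ?_⟩
  by_contra h
  push_neg at h
  have hlt : ∀ x ∈ L, dist w x < r := fun x hx => lt_of_le_of_ne (hle x hx) (h x hx)
  have hopen : IsOpen (⋂ x ∈ L, ball x r) := isOpen_biInter_finset (fun _ _ => isOpen_ball)
  have hsub : (⋂ x ∈ L, ball x r) ⊆ IL := by
    rw [hIL]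
    exact Set.iInter₂_mono (fun x hx => ball_subset_closedBall)
  have hint : w ∈ interior IL :=
    interior_maximal hsub hopen (Set.mem_iInter₂.2 fun x hx => mem_ball.2 (hlt x hx))
  exact hw.2 hint

end Aux

/-- Let `L` and `R` be nonempty finite point sets in the plane strictly
separated by a line, and `r > 0`. If `I_r(L)` and `I_r(R)` are nonempty and neither is
contained in the other, then the boundaries `∂I_r(L)` and `∂I_r(R)` intersect in at most
two points: any point of the intersection of the boundaries equals one of any two given
distinct intersection points. -/
theorem boundaries_intersect_at_most_twice (L R : Finset (EuclideanSpace ℝ (Fin 2)))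
    (r : ℝ) (hr : 0 < r) (hL : L.Nonempty) (hR : R.Nonempty)
    (f : EuclideanSpace ℝ (Fin 2) →L[ℝ] ℝ) (a : ℝ)
    (hsep : (∀ p ∈ L, f p < a) ∧ (∀ q ∈ R, a < f q))
    (IL IR : Set (EuclideanSpace ℝ (Fin 2)))
    (hIL : IL = ⋂ x ∈ L, closedBall x r) (hIR : IR = ⋂ x ∈ R, closedBall x r)
    (hILne : IL.Nonempty) (hIRne : IR.Nonempty)
    (hnsub₁ : ¬ IL ⊆ IR) (hnsub₂ : ¬ IR ⊆ IL)
    (p q : EuclideanSpace ℝ (Fin 2)) (hp : p ∈ frontier IL ∩ frontier IR)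
    (hq : q ∈ frontier IL ∩ frontier IR) (hpq : p ≠ q) :
    ∀ z ∈ frontier IL ∩ frontier IR, z = p ∨ z = q := by
  obtain ⟨hsepL, hsepR⟩ := hsep
  intro z hz
  by_contra hcon
  push_neg at hcon
  obtain ⟨hzp, hzq⟩ := hcon
  exfalso
  -- frontier witnesses
  obtain ⟨hpIL, xp, hxpL, hxp⟩ := frontier_witness L r IL hIL hp.1
  obtain ⟨hpIR, yp, hypR, hyp⟩ := frontier_witness R r IR hIR hp.2
  obtain ⟨hqIL, xq, hxqL, hxq⟩ := frontier_witness L r IL hIL hq.1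
  obtain ⟨hqIR, yq, hyqR, hyq⟩ := frontier_witness R r IR hIR hq.2
  obtain ⟨hzIL, xz, hxzL, hxz⟩ := frontier_witness L r IL hIL hz.1
  obtain ⟨hzIR, yz, hyzR, hyz⟩ := frontier_witness R r IR hIR hz.2
  -- membership distance bounds
  have hLd : ∀ w ∈ IL, ∀ x ∈ L, dist w x ≤ r := by
    intro w hw x hx
    rw [hIL] at hw
    exact mem_closedBall.1 (Set.mem_iInter₂.1 hw x hx)
  have hRd : ∀ w ∈ IR, ∀ y ∈ R, dist w y ≤ r := by
    intro w hw y hy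
    rw [hIR] at hw
    exact mem_closedBall.1 (Set.mem_iInter₂.1 hw y hy)
  -- the three points on the separating line
  obtain ⟨cp, hcp0, hcpq, hcpz, hcpf⟩ := key r hr p q z xp yp f a hpq.symm hzp
    hxp hyp (hLd q hqIL xp hxpL) (hLd z hzIL xp hxpL)
    (hRd q hqIR yp hypR) (hRd z hzIR yp hypR) (hsepL xp hxpL) (hsepR yp hypR)
  obtain ⟨cq, hcq0, hcqp, hcqz, hcqf⟩ := key r hr q p z xq yq f a hpq hzq
    hxq hyq (hLd p hpIL xq hxqL) (hLd z hzIL xq hxqL)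
    (hRd p hpIR yq hyqR) (hRd z hzIR yq hyqR) (hsepL xq hxqL) (hsepR yq hyqR)
  obtain ⟨cz, hcz0, hczp, hczq, hczf⟩ := key r hr z p q xz yz f a hzp.symm hzq.symm
    hxz hyz (hLd p hpIL xz hxzL) (hLd q hqIL xz hxzL)
    (hRd p hpIR yz hyzR) (hRd q hqIR yz hyzR) (hsepL xz hxzL) (hsepR yz hyzR)
  -- the three c's are pairwise distinct
  have hcpq' : cp ≠ cq := by
    intro h
    rw [h] at hcpq
    exact absurd hcq0 hcpq.ne
  have hcpz' : cp ≠ cz := by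
    intro h
    rw [h] at hcpz
    exact absurd hcz0 hcpz.ne
  have hcqz' : cq ≠ cz := by
    intro h
    rw [h] at hcqz
    exact absurd hcz0 hcqz.ne
  -- collinearity: both difference vectors lie in ker f which is 1-dimensional
  have hfd : (0:ℝ) < f yp - f xp := by
    have := hsepL xp hxpL
    have := hsepR yp hypR
    linarith
  have hfne : f (yp - xp) ≠ 0 := by
    rw [map_sub]
    linarith
  have hsurj : Function.Surjective (f.toLinearMap) := by
    intro r₀
    refine ⟨(r₀ / f (yp - xp)) • (yp - xp), ?_⟩
    simp only [LinearMap.map_smul, ContinuousLinearMap.coe_coe, smul_eq_mul]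
    field_simp
  have hker1 : Module.finrank ℝ (LinearMap.ker f.toLinearMap) = 1 := by
    have h1 := LinearMap.finrank_range_add_finrank_ker (f.toLinearMap)
    rw [LinearMap.range_eq_top.2 hsurj] at h1
    rw [finrank_top] at h1
    have h2 : Module.finrank ℝ (EuclideanSpace ℝ (Fin 2)) = 2 := finrank_euclideanSpace_fin
    rw [h2] at h1
    have h3 : Module.finrank ℝ ℝ = 1 := Module.finrank_self ℝ
    omega
  have hv₁ : cq - cp ∈ LinearMap.ker f.toLinearMap := by
    simp only [LinearMap.mem_ker, ContinuousLinearMap.coe_coe, map_sub]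
    rw [hcqf, hcpf]
    ring
  have hv₂ : cz - cp ∈ LinearMap.ker f.toLinearMap := by
    simp only [LinearMap.mem_ker, ContinuousLinearMap.coe_coe, map_sub]
    rw [hczf, hcpf]
    ring
  have hv₁ne : cq - cp ≠ 0 := sub_ne_zero.2 hcpq'.symm
  have hspan : (ℝ ∙ (cq - cp)) = LinearMap.ker f.toLinearMap := by
    apply Submodule.eq_of_le_of_finrank_le
    · rw [Submodule.span_le, Set.singleton_subset_iff]
      exact hv₁
    · rw [hker1, finrank_span_singleton hv₁ne]
  have hmem2 : cz - cp ∈ (ℝ ∙ (cq - cp)) := by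
    rw [hspan]
    exact hv₂
  obtain ⟨s, hs⟩ := Submodule.mem_span_singleton.1 hmem2
  -- hs : s • (cq - cp) = cz - cp
  have hs0 : s ≠ 0 := by
    intro h
    rw [h, zero_smul] at hs
    exact hcpz' (by
      have := hs.symm
      rw [sub_eq_zero] at this
      exact this.symm)
  have hs1 : s ≠ 1 := by
    intro h
    rw [h, one_smul] at hs
    have : cq = cz := by
      have h2 := hs
      have : cq - cp - (cz - cp) = 0 := by rw [h2]; abel
      have h3 : cq - cz = 0 := by
        rw [← this]; abel
      rw [sub_eq_zero] at h3
      exact h3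
    exact hcqz' this
  rcases lt_trichotomy s 0 with hneg | hzero | hpos
  · -- cp is the middle point : cp = (1/(1-s)) • cz + (-s/(1-s)) • cq
    have h1s : (0:ℝ) < 1 - s := by linarith
    refine middle_contra hczp.le hcqp.le hcp0 (t := -s / (1 - s)) ?_ ?_ ?_ hcqz'.symm
    · exact div_pos (neg_pos.2 hneg) h1s
    · rw [div_lt_one h1s]; linarith
    · have hcz : cz = cp + s • (cq - cp) := by rw [hs]; abel
      rw [hcz]
      match_scalars <;> field_simp <;> ring
  · exact hs0 hzero
  · rcases lt_trichotomy s 1 with hlt | heq | hgt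
    · -- cz is the middle point : cz = (1-s) • cp + s • cq
      refine middle_contra hcpz.le hcqz.le hcz0 (t := s) hpos hlt ?_ hcpq'
      have hcz : cz = cp + s • (cq - cp) := by rw [hs]; abel
      rw [hcz]
      match_scalars <;> ring
    · exact hs1 heq
    · -- cq is the middle point : cq = (1 - 1/s) • cp + (1/s) • cz
      have hspos : (0:ℝ) < s := hpos
      refine middle_contra hcpq.le hczq.le hcq0 (t := 1 / s) (by positivity) ?_ ?_ hcpz'
      · rw [div_lt_one hspos]; linarith
      · have hcz : cz = cp + s • (cq - cp) := by rw [hs]; abel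
        rw [hcz]
        match_scalars <;> field_simp <;> ring
end

section
/- Let S be a finite set of n points in the plane and suppose two congruent closed disks D_1, D_2 of radius r cover S with D_1 ∩ D_2 containing a point o. Then there exist two rays μ_1, μ_2 emanating from o such that the open region between them on one side contains only points of S covered by D_1 and the other region contains only points covered by D_2; equivalently, S can be partitioned into S_1 ⊆ D_1 and S_2 ⊆ D_2 such that S_1 and S_2 are angularly separated around o by two rays. -/
open Metric Real
open scoped Classical ComplexConjugate

section TwoRaysAux

open Complex

noncomputable def Fln (c₁ c₂ : ℂ) (x : ℂ) : ℝ := ((x - (c₁ + c₂)/2) * conj (c₂ - c₁)).re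

lemma f_eq (c₁ c₂ x : ℂ) :
    Complex.normSq (x - c₁) - Complex.normSq (x - c₂) = 2 * Fln c₁ c₂ x := by
  simp [Fln, Complex.normSq_apply, Complex.mul_re, Complex.sub_re, Complex.sub_im,
    Complex.add_re, Complex.add_im, Complex.div_re, Complex.div_im, Complex.normSq]
  ring

lemma F_comb (c₁ c₂ x y : ℂ) (s t : ℝ) (hst : s + t = 1) :
    Fln c₁ c₂ ((s:ℂ) * x + (t:ℂ) * y) = s * Fln c₁ c₂ x + t * Fln c₁ c₂ y := by
  have h : (t:ℝ) = 1 - s := by linarith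
  subst h
  simp [Fln, Complex.mul_re, Complex.sub_re, Complex.sub_im, Complex.add_re, Complex.add_im,
    Complex.ofReal_re, Complex.ofReal_im]
  ring

lemma F_sub (c₁ c₂ x y : ℂ) :
    Fln c₁ c₂ x - Fln c₁ c₂ y = ((x - y) * conj (c₂ - c₁)).re := by
  simp [Fln, Complex.mul_re, Complex.sub_re, Complex.sub_im, Complex.add_re, Complex.add_im]
  ring

lemma im_div_neg_I_mul (v z : ℂ) :
    (z / (-(Complex.I * v))).im = (z * conj v).re / Complex.normSq v := by
  rw [Complex.div_im]
  simp [Complex.mul_re, Complex.mul_im, Complex.normSq_apply]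
  ring_nf

lemma rep_lemma (A z : ℂ) (hA : A ≠ 0) (hz : z ≠ 0) :
    ((‖z‖ : ℝ) : ℂ) * Complex.exp ((↑(A.arg + (z / A).arg)) * Complex.I) = z := by
  have h1 := Complex.norm_mul_exp_arg_mul_I A
  have h2 := Complex.norm_mul_exp_arg_mul_I (z / A)
  have hAabs : ‖A‖ ≠ 0 := by simpa using hA
  have habsR : ‖z‖ = ‖A‖ * ‖(z / A)‖ := by
    rw [norm_div, mul_div_cancel₀ _ hAabs]
  have habs : ((‖z‖ : ℝ) : ℂ) = (‖A‖ : ℂ) * (‖(z / A)‖ : ℂ) := by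
    rw [habsR]; push_cast; ring
  have hsplit : ((↑(A.arg + (z / A).arg) : ℂ)) * Complex.I
      = (A.arg : ℂ) * Complex.I + ((z / A).arg : ℂ) * Complex.I := by push_cast; ring
  rw [hsplit, Complex.exp_add, habs]
  calc (‖A‖ : ℂ) * (‖(z / A)‖ : ℂ) *
        (Complex.exp ((A.arg : ℂ) * Complex.I) * Complex.exp (((z / A).arg : ℂ) * Complex.I))
      = ((‖A‖ : ℂ) * Complex.exp ((A.arg : ℂ) * Complex.I)) *
        ((‖(z / A)‖ : ℂ) * Complex.exp (((z / A).arg : ℂ) * Complex.I)) := by ring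
    _ = A * (z / A) := by rw [h1, h2]
    _ = z := mul_div_cancel₀ z hA

lemma cone_iff' (C w : ℂ) (hC : C ≠ 0) (hw : w ≠ 0) (h0 : 0 ≤ C.arg) (hπ : C.arg < π) :
    (∃ s t : ℝ, 0 ≤ s ∧ 0 ≤ t ∧ w = s + t * C) ↔ 0 ≤ w.arg ∧ w.arg ≤ C.arg := by
  have hCabs : 0 < ‖C‖ := by simpa using hC
  have hwabs : 0 < ‖w‖ := by simpa using hw
  have hCim : 0 ≤ C.im := Complex.arg_nonneg_iff.mp h0
  have hsin : Real.sin (C.arg - w.arg) =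
      (C.im * w.re - C.re * w.im) / (‖C‖ * ‖w‖) := by
    rw [Real.sin_sub, Complex.sin_arg, Complex.sin_arg, Complex.cos_arg hC, Complex.cos_arg hw]
    field_simp
    try ring
  constructor
  · rintro ⟨s, t, hs, ht, hst⟩
    have hre : w.re = s + t * C.re := by rw [hst]; simp
    have him : w.im = t * C.im := by rw [hst]; simp
    have hwarg : 0 ≤ w.arg := Complex.arg_nonneg_iff.mpr (by nlinarith)
    refine ⟨hwarg, ?_⟩
    by_contra hlt
    push_neg at hlt
    have hwpi : w.arg ≤ π := Complex.arg_le_pi w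
    have hcross : C.im * w.re - C.re * w.im = s * C.im := by rw [hre, him]; ring
    have hd : C.arg - w.arg < 0 := by linarith
    rcases eq_or_lt_of_le (show -π ≤ C.arg - w.arg by linarith) with h | h
    · have hweq : w.arg = π := by linarith
      have hCeq : C.arg = 0 := by linarith
      have hCre := Complex.arg_eq_zero_iff.mp hCeq
      have hwre := Complex.arg_eq_pi_iff.mp hweq
      nlinarith [hCre.1, hwre.1]
    · have hsinpos : 0 < Real.sin (w.arg - C.arg) :=
        Real.sin_pos_of_pos_of_lt_pi (by linarith) (by linarith)
      have hflip : Real.sin (C.arg - w.arg) = - Real.sin (w.arg - C.arg) := by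
        rw [show C.arg - w.arg = -(w.arg - C.arg) by ring, Real.sin_neg]
      have hneg : Real.sin (C.arg - w.arg) < 0 := by rw [hflip]; linarith
      rw [hsin] at hneg
      have hlt2 : C.im * w.re - C.re * w.im < 0 := by
        by_contra hge
        push_neg at hge
        have := div_nonneg hge (by positivity : (0:ℝ) ≤ ‖C‖ * ‖w‖)
        linarith
      nlinarith
  · rintro ⟨h1, h2⟩
    rcases eq_or_lt_of_le h0 with hC0 | hCpos
    · have hweq : w.arg = 0 := le_antisymm (by linarith) h1
      have hw0 := Complex.arg_eq_zero_iff.mp hweq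
      refine ⟨w.re, 0, ?_, le_refl 0, ?_⟩
      · rcases eq_or_lt_of_le hw0.1 with h | h
        · exact absurd (Complex.ext h.symm hw0.2) hw
        · exact h.le
      · apply Complex.ext <;> simp [hw0.2]
    · have hCimpos : 0 < C.im := by
        have hs : 0 < Real.sin C.arg := Real.sin_pos_of_pos_of_lt_pi hCpos hπ
        have heq : C.im = Real.sin C.arg * ‖C‖ := by
          rw [Complex.sin_arg]; field_simp
        nlinarith
      have hwim : 0 ≤ w.im := Complex.arg_nonneg_iff.mp h1
      have htnn : 0 ≤ w.im / C.im := div_nonneg hwim hCimpos.le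
      have hdnn : 0 ≤ Real.sin (C.arg - w.arg) := by
        apply Real.sin_nonneg_of_nonneg_of_le_pi (by linarith)
        have := Complex.arg_le_pi C
        linarith
      rw [hsin] at hdnn
      have hcross : 0 ≤ C.im * w.re - C.re * w.im := by
        by_contra hlt
        push_neg at hlt
        have : (C.im * w.re - C.re * w.im) / (‖C‖ * ‖w‖) < 0 :=
          div_neg_of_neg_of_pos hlt (by positivity)
        linarith
      refine ⟨w.re - w.im / C.im * C.re, w.im / C.im, ?_, htnn, ?_⟩
      · rw [sub_nonneg, div_mul_eq_mul_div, div_le_iff₀ hCimpos]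
        nlinarith
      · apply Complex.ext
        · simp
        · simp
          field_simp

lemma exp_sub_two_pi (x : ℝ) :
    Complex.exp ((↑(x - 2*π)) * Complex.I) = Complex.exp ((x:ℝ) * Complex.I) := by
  push_cast
  rw [sub_mul, Complex.exp_sub, Complex.exp_two_pi_mul_I, div_one]

lemma exp_add_two_pi (x : ℝ) :
    Complex.exp ((↑(x + 2*π)) * Complex.I) = Complex.exp ((x:ℝ) * Complex.I) := by
  push_cast
  rw [add_mul, Complex.exp_add, Complex.exp_two_pi_mul_I, mul_one]

lemma assembly (S : Finset ℂ) (r : ℝ) (c₁ c₂ o : ℂ) (A : ℂ) (δ : ℝ)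
    (hA : A ≠ 0) (hδ0 : 0 ≤ δ) (hδπ : δ ≤ π)
    (hoD1 : o ∈ closedBall c₁ r)
    (H2 : ∀ p ∈ S, p ≠ o → (((p - o) / A).arg ∈ Set.Icc 0 δ) → p ∈ closedBall c₂ r)
    (H1 : ∀ p ∈ S, p ≠ o → (((p - o) / A).arg ∉ Set.Icc 0 δ) → p ∈ closedBall c₁ r) :
    ∃ S₁ S₂ : Finset ℂ, S₁ ∪ S₂ = S ∧ Disjoint S₁ S₂ ∧
      (S₁ : Set ℂ) ⊆ closedBall c₁ r ∧ (S₂ : Set ℂ) ⊆ closedBall c₂ r ∧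
      ∃ θ₁ θ₂ : ℝ, θ₁ ≤ θ₂ ∧ θ₂ ≤ θ₁ + 2 * π ∧
        (∀ p ∈ S₁, p ≠ o →
          ∃ θ ∈ Set.Icc θ₁ θ₂, ∃ ρ : ℝ, 0 < ρ ∧ p - o = ρ * Complex.exp (θ * Complex.I)) ∧
        (∀ p ∈ S₂, p ≠ o →
          ∃ θ ∈ Set.Icc θ₂ (θ₁ + 2 * π), ∃ ρ : ℝ, 0 < ρ ∧
            p - o = ρ * Complex.exp (θ * Complex.I)) := by
  set P : ℂ → Prop := fun p => p ≠ o ∧ (((p - o) / A).arg ∈ Set.Icc 0 δ) with hP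
  refine ⟨S.filter (fun p => ¬ P p), S.filter P, ?_, ?_, ?_, ?_, ?_⟩
  · rw [Finset.union_comm]
    exact Finset.filter_union_filter_not_eq P S
  · exact (Finset.disjoint_filter_filter_not S S P).symm
  · intro p hp
    simp only [Finset.coe_filter, Set.mem_setOf_eq] at hp
    obtain ⟨hpS, hnP⟩ := hp
    by_cases hpo : p = o
    · rw [hpo]; exact hoD1
    · refine H1 p hpS hpo ?_
      intro hmem
      exact hnP ⟨hpo, hmem⟩
  · intro p hp
    simp only [Finset.coe_filter, Set.mem_setOf_eq] at hp
    exact H2 p hp.1 hp.2.1 hp.2.2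
  · refine ⟨A.arg + δ - 2*π, A.arg, by linarith [Real.pi_pos], by linarith, ?_, ?_⟩
    · intro p hp hpo
      rw [Finset.mem_filter] at hp
      have hz : p - o ≠ 0 := sub_ne_zero.mpr hpo
      have hzabs : 0 < ‖(p - o)‖ := by simpa using hz
      set β := ((p - o) / A).arg with hβ
      have hnmem : β ∉ Set.Icc 0 δ := fun hmem => hp.2 ⟨hpo, hmem⟩
      rw [Set.mem_Icc, not_and_or, not_le, not_le] at hnmem
      have hβlo : -π < β := Complex.neg_pi_lt_arg _
      have hβhi : β ≤ π := Complex.arg_le_pi _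
      rcases hnmem with hneg | hgt
      · refine ⟨A.arg + β, ⟨by linarith [Real.pi_pos], by linarith⟩,
          ‖(p - o)‖, hzabs, ?_⟩
        exact (rep_lemma A (p - o) hA hz).symm
      · refine ⟨A.arg + β - 2*π, ⟨by linarith, by linarith [Real.pi_pos]⟩,
          ‖(p - o)‖, hzabs, ?_⟩
        rw [show ((A.arg + β - 2*π : ℝ) : ℂ) = ((A.arg + β - 2*π : ℝ)) from rfl,
          exp_sub_two_pi (A.arg + β)]
        exact (rep_lemma A (p - o) hA hz).symm
    · intro p hp hpo
      rw [Finset.mem_filter] at hp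
      have hz : p - o ≠ 0 := sub_ne_zero.mpr hpo
      have hzabs : 0 < ‖(p - o)‖ := by simpa using hz
      obtain ⟨-, hmem⟩ := hp.2
      rw [Set.mem_Icc] at hmem
      refine ⟨A.arg + ((p - o) / A).arg, ⟨by linarith [hmem.1], by linarith [hmem.2]⟩,
        ‖(p - o)‖, hzabs, ?_⟩
      exact (rep_lemma A (p - o) hA hz).symm

lemma ab_on_circle (c₁ c₂ : ℂ) (r h : ℝ) (hv : c₂ - c₁ ≠ 0)
    (hh : h^2 = r^2 - (‖(c₂ - c₁)‖)^2/4) (ε : ℝ) (hε : ε = 1 ∨ ε = -1) :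
    Complex.normSq ((c₁ + c₂)/2 + (ε*h/‖(c₂ - c₁)‖ : ℝ) * (Complex.I * (c₂ - c₁)) - c₂)
      = r^2 ∧
    Complex.normSq ((c₁ + c₂)/2 + (ε*h/‖(c₂ - c₁)‖ : ℝ) * (Complex.I * (c₂ - c₁)) - c₁)
      = r^2 := by
  set v := c₂ - c₁ with hvdef
  set d := ‖v‖ with hd
  have hdpos : 0 < d := by simpa [hd] using hv
  have hd2 : d^2 = Complex.normSq v := by rw [hd, Complex.sq_norm]
  have hε2 : ε^2 = 1 := by rcases hε with h|h <;> simp [h]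
  constructor
  · have : (c₁ + c₂)/2 + ((ε*h/d : ℝ) : ℂ) * (Complex.I * v) - c₂
        = v * (((ε*h/d : ℝ) : ℂ) * Complex.I - 1/2) := by
      rw [hvdef]; push_cast; ring
    rw [this, map_mul]
    have h2 : Complex.normSq (((ε*h/d : ℝ) : ℂ) * Complex.I - 1/2) = (ε*h/d)^2 + 1/4 := by
      simp [Complex.normSq_apply, Complex.sub_re, Complex.sub_im, Complex.mul_re, Complex.mul_im]
      ring
    rw [h2, ← hd2]
    have heh : (ε*h)^2 = r^2 - d^2/4 := by rw [mul_pow, hε2, one_mul, hh]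
    have hdd : d^2 * (ε*h/d)^2 = (ε*h)^2 := by
      rw [div_pow, mul_div_assoc']; exact mul_div_cancel_left₀ _ (pow_ne_zero 2 hdpos.ne')
    linear_combination hdd + heh
  · have : (c₁ + c₂)/2 + ((ε*h/d : ℝ) : ℂ) * (Complex.I * v) - c₁
        = v * (((ε*h/d : ℝ) : ℂ) * Complex.I + 1/2) := by
      rw [hvdef]; push_cast; ring
    rw [this, map_mul]
    have h2 : Complex.normSq (((ε*h/d : ℝ) : ℂ) * Complex.I + 1/2) = (ε*h/d)^2 + 1/4 := by
      simp [Complex.normSq_apply, Complex.add_re, Complex.add_im, Complex.mul_re, Complex.mul_im]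
      ring
    rw [h2, ← hd2]
    have heh : (ε*h)^2 = r^2 - d^2/4 := by rw [mul_pow, hε2, one_mul, hh]
    have hdd : d^2 * (ε*h/d)^2 = (ε*h)^2 := by
      rw [div_pow, mul_div_assoc']; exact mul_div_cancel_left₀ _ (pow_ne_zero 2 hdpos.ne')
    linear_combination hdd + heh

lemma chord (c₁ c₂ : ℂ) (r h : ℝ) (hv : c₂ - c₁ ≠ 0) (hh0 : 0 ≤ h)
    (hh : h^2 = r^2 - (‖(c₂ - c₁)‖)^2/4) (z : ℂ)
    (hz2 : Complex.normSq (z - c₂) ≤ r^2) (hzL : Fln c₁ c₂ z = 0) :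
    ∃ s t : ℝ, 0 ≤ s ∧ 0 ≤ t ∧ s + t = 1 ∧
      z = (s:ℂ) * ((c₁ + c₂)/2 + (h/‖(c₂ - c₁)‖ : ℝ) * (Complex.I * (c₂ - c₁)))
        + (t:ℂ) * ((c₁ + c₂)/2 - (h/‖(c₂ - c₁)‖ : ℝ) * (Complex.I * (c₂ - c₁))) := by
  set v := c₂ - c₁ with hvdef
  set m := (c₁ + c₂)/2 with hm
  set d := ‖v‖ with hd
  have hdpos : 0 < d := by simpa [hd] using hv
  have hd2 : d^2 = Complex.normSq v := by rw [hd, Complex.sq_norm]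
  set q : ℂ := (z - m) / v with hq
  have hzm : z - m = q * v := (div_mul_cancel₀ _ hv).symm
  have hqre : q.re = 0 := by
    have h1 : ((z - m) * conj v).re = q.re * Complex.normSq v := by
      rw [hzm, mul_assoc, Complex.mul_conj]
      simp
    have h2 : ((z - m) * conj v).re = 0 := hzL
    rw [h2] at h1
    have hns : 0 < Complex.normSq v := Complex.normSq_pos.mpr hv
    nlinarith [h1, hns]
  set c : ℝ := q.im with hc
  have hqc : q = (c:ℂ) * Complex.I := by
    apply Complex.ext <;> simp [hqre, hc]
  have hzc2 : z - c₂ = v * ((c:ℂ) * Complex.I - 1/2) := by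
    have : z - c₂ = (z - m) + (m - c₂) := by ring
    rw [this, hzm, hqc]
    rw [hm, hvdef]; ring
  have hns : Complex.normSq (z - c₂) = d^2 * (c^2 + 1/4) := by
    rw [hzc2, map_mul, ← hd2]
    have : Complex.normSq ((c:ℂ) * Complex.I - 1/2) = c^2 + 1/4 := by
      simp [Complex.normSq_apply, Complex.sub_re, Complex.sub_im, Complex.mul_re, Complex.mul_im]
      ring
    rw [this]
  have hcd : (c*d)^2 ≤ h^2 := by nlinarith [hz2, hns, hd2]
  have hcdabs : |c*d| ≤ h := by
    have h1 : Real.sqrt ((c*d)^2) ≤ Real.sqrt (h^2) := Real.sqrt_le_sqrt hcd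
    rwa [Real.sqrt_sq_eq_abs, Real.sqrt_sq hh0] at h1
  by_cases hhz : h = 0
  · have hc0 : c = 0 := by
      rw [hhz] at hcdabs
      have hcd0 : c * d = 0 := abs_eq_zero.mp (le_antisymm hcdabs (abs_nonneg _))
      rcases mul_eq_zero.mp hcd0 with h|h
      · exact h
      · exact absurd h (ne_of_gt hdpos)
    refine ⟨1/2, 1/2, by norm_num, by norm_num, by norm_num, ?_⟩
    have hzm' : z = m := by
      have : z - m = 0 := by rw [hzm, hqc, hc0]; simp
      linear_combination this
    rw [hzm', hhz]
    push_cast; ring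
  · have hhpos : 0 < h := lt_of_le_of_ne hh0 (Ne.symm hhz)
    refine ⟨(h + c*d)/(2*h), (h - c*d)/(2*h), ?_, ?_, ?_, ?_⟩
    · apply div_nonneg ?_ (by linarith)
      have := neg_abs_le (c*d); linarith [hcdabs]
    · apply div_nonneg ?_ (by linarith)
      have := le_abs_self (c*d); linarith [hcdabs]
    · field_simp; ring
    · have hz' : z = m + (c:ℂ) * Complex.I * v := by
        have : z - m = (c:ℂ) * Complex.I * v := by rw [hzm, hqc]
        linear_combination this
      rw [hz']
      have hdc : ((d:ℝ):ℂ) ≠ 0 := by exact_mod_cast ne_of_gt hdpos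
      have hhc : ((h:ℝ):ℂ) ≠ 0 := by exact_mod_cast hhz
      push_cast
      field_simp
      ring

lemma mem_iff_normSq (x c : ℂ) (r : ℝ) (hr : 0 ≤ r) :
    x ∈ closedBall c r ↔ Complex.normSq (x - c) ≤ r^2 := by
  rw [mem_closedBall, Complex.dist_eq, ← Complex.sq_norm]
  constructor <;> intro h <;> nlinarith [norm_nonneg (x - c)]

lemma decomp_iff (A B z : ℂ) (hA : A ≠ 0) (s t : ℝ) :
    z / A = (s:ℂ) + (t:ℂ) * (B / A) ↔ z = (s:ℂ)*A + (t:ℂ)*B := by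
  rw [div_eq_iff hA, add_mul, mul_assoc, div_mul_cancel₀ B hA]

lemma core (S : Finset ℂ) (r : ℝ) (hr : 0 < r) (c₁ c₂ o a b : ℂ)
    (hcover : (S : Set ℂ) ⊆ closedBall c₁ r ∪ closedBall c₂ r)
    (ho : o ∈ closedBall c₁ r ∩ closedBall c₂ r)
    (ha2 : a ∈ closedBall c₂ r) (hb2 : b ∈ closedBall c₂ r)
    (hFa : Fln c₁ c₂ a = 0) (hFb : Fln c₁ c₂ b = 0) (hFo : Fln c₁ c₂ o < 0)
    (chordP : ∀ z, Complex.normSq (z - c₂) ≤ r^2 → Fln c₁ c₂ z = 0 →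
       ∃ s t : ℝ, 0 ≤ s ∧ 0 ≤ t ∧ s + t = 1 ∧ z = (s:ℂ)*a + (t:ℂ)*b)
    (hδ0 : 0 ≤ ((b - o)/(a - o)).arg) (hδπ : ((b - o)/(a - o)).arg < π) :
    ∃ S₁ S₂ : Finset ℂ, S₁ ∪ S₂ = S ∧ Disjoint S₁ S₂ ∧
      (S₁ : Set ℂ) ⊆ closedBall c₁ r ∧ (S₂ : Set ℂ) ⊆ closedBall c₂ r ∧
      ∃ θ₁ θ₂ : ℝ, θ₁ ≤ θ₂ ∧ θ₂ ≤ θ₁ + 2 * π ∧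
        (∀ p ∈ S₁, p ≠ o →
          ∃ θ ∈ Set.Icc θ₁ θ₂, ∃ ρ : ℝ, 0 < ρ ∧ p - o = ρ * Complex.exp (θ * Complex.I)) ∧
        (∀ p ∈ S₂, p ≠ o →
          ∃ θ ∈ Set.Icc θ₂ (θ₁ + 2 * π), ∃ ρ : ℝ, 0 < ρ ∧
            p - o = ρ * Complex.exp (θ * Complex.I)) := by
  have hA : a - o ≠ 0 := by
    intro h
    rw [sub_eq_zero] at h
    rw [← h] at hFo
    rw [hFa] at hFo
    exact lt_irrefl 0 hFo
  have hB : b - o ≠ 0 := by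
    intro h
    rw [sub_eq_zero] at h
    rw [← h] at hFo
    rw [hFb] at hFo
    exact lt_irrefl 0 hFo
  set A := a - o with hAdef
  set B := b - o with hBdef
  set δ := (B/A).arg with hδ
  have hC : B/A ≠ 0 := div_ne_zero hB hA
  refine assembly S r c₁ c₂ o A δ hA hδ0 (le_of_lt (lt_of_lt_of_le hδπ (le_refl π))) ho.1 ?_ ?_
  · -- H2
    intro p hpS hpo harg
    by_cases hp2 : p ∈ closedBall c₂ r
    · exact hp2
    exfalso
    have hp1 : p ∈ closedBall c₁ r := by
      rcases hcover hpS with h | h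
      · exact h
      · exact absurd h hp2
    have hFp : Fln c₁ c₂ p < 0 := by
      have h1 : Complex.normSq (p - c₁) ≤ r^2 := (mem_iff_normSq p c₁ r hr.le).mp hp1
      have h2 : ¬ Complex.normSq (p - c₂) ≤ r^2 := fun hc =>
        hp2 ((mem_iff_normSq p c₂ r hr.le).mpr hc)
      push_neg at h2
      nlinarith [f_eq c₁ c₂ p]
    have hz : p - o ≠ 0 := sub_ne_zero.mpr hpo
    have hw : (p - o)/A ≠ 0 := div_ne_zero hz hA
    rw [Set.mem_Icc] at harg
    obtain ⟨s, t, hs, ht, hweq⟩ := (cone_iff' (B/A) ((p-o)/A) hC hw hδ0 hδπ).mpr harg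
    have hpo' : p - o = (s:ℂ)*A + (t:ℂ)*B := (decomp_iff A B (p-o) hA s t).mp hweq
    set σ := s + t with hσdef
    have hσ : 0 < σ := by
      rcases lt_or_eq_of_le (by positivity : (0:ℝ) ≤ σ) with h | h
      · exact h
      · exfalso
        have hs0 : s = 0 := by linarith [hσdef ▸ h.symm, hs, ht]
        have ht0 : t = 0 := by linarith [hσdef ▸ h.symm, hs, ht]
        rw [hs0, ht0] at hpo'
        simp at hpo'
        exact hz hpo'
    set q := ((s/σ : ℝ):ℂ) * a + ((t/σ : ℝ):ℂ) * b with hqdef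
    have hsum : s/σ + t/σ = 1 := by field_simp; linarith [hσdef]
    have hq2 : q ∈ closedBall c₂ r := by
      have := (convex_closedBall c₂ r) ha2 hb2 (div_nonneg hs hσ.le) (div_nonneg ht hσ.le) hsum
      rw [Complex.real_smul, Complex.real_smul] at this
      rwa [← hqdef] at this
    have hFq : Fln c₁ c₂ q = 0 := by
      rw [hqdef, F_comb c₁ c₂ a b (s/σ) (t/σ) hsum, hFa, hFb]
      ring
    have hq' : q = o + ((1/σ : ℝ):ℂ) * (p - o) := by
      rw [hqdef, hpo', hAdef, hBdef]
      have hσc : ((σ:ℝ):ℂ) ≠ 0 := by exact_mod_cast ne_of_gt hσ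
      push_cast
      field_simp
      rw [hσdef]
      push_cast
      ring
    have hp' : p = ((1-σ : ℝ):ℂ) * o + ((σ:ℝ):ℂ) * q := by
      rw [hq']
      have hσc : ((σ:ℝ):ℂ) ≠ 0 := by exact_mod_cast ne_of_gt hσ
      push_cast
      field_simp
      ring
    rcases le_or_gt σ 1 with hσ1 | hσ1
    · -- p in segment [o, q] ⊆ D₂
      have : p ∈ closedBall c₂ r := by
        have := (convex_closedBall c₂ r) ho.2 hq2 (by linarith : (0:ℝ) ≤ 1 - σ) hσ.le
          (by ring : (1 - σ) + σ = 1)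
        rw [Complex.real_smul, Complex.real_smul] at this
        rwa [← hp'] at this
      exact hp2 this
    · -- F p = (1-σ) F o > 0, contradiction
      have : Fln c₁ c₂ p = (1-σ) * Fln c₁ c₂ o + σ * Fln c₁ c₂ q := by
        rw [hp'] at *
        exact F_comb c₁ c₂ o q (1-σ) σ (by ring)
      rw [hFq] at this
      nlinarith
  · -- H1
    intro p hpS hpo hnarg
    by_cases hp1 : p ∈ closedBall c₁ r
    · exact hp1
    exfalso
    have hp2 : p ∈ closedBall c₂ r := by
      rcases hcover hpS with h | h
      · exact absurd h hp1
      · exact h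
    have hFp : 0 < Fln c₁ c₂ p := by
      have h2 : Complex.normSq (p - c₂) ≤ r^2 := (mem_iff_normSq p c₂ r hr.le).mp hp2
      have h1 : ¬ Complex.normSq (p - c₁) ≤ r^2 := fun hc =>
        hp1 ((mem_iff_normSq p c₁ r hr.le).mpr hc)
      push_neg at h1
      nlinarith [f_eq c₁ c₂ p]
    set τ := (- Fln c₁ c₂ o) / (Fln c₁ c₂ p - Fln c₁ c₂ o) with hτdef
    have hden : 0 < Fln c₁ c₂ p - Fln c₁ c₂ o := by linarith
    have hτpos : 0 < τ := div_pos (by linarith) hden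
    have hτle : τ ≤ 1 := by
      rw [hτdef, div_le_one hden]
      linarith
    set q := ((1 - τ : ℝ):ℂ) * o + ((τ:ℝ):ℂ) * p with hqdef
    have hq2 : q ∈ closedBall c₂ r := by
      have := (convex_closedBall c₂ r) ho.2 hp2 (by linarith : (0:ℝ) ≤ 1 - τ) hτpos.le
        (by ring : (1 - τ) + τ = 1)
      rw [Complex.real_smul, Complex.real_smul] at this
      rwa [← hqdef] at this
    have hFq : Fln c₁ c₂ q = 0 := by
      rw [hqdef, F_comb c₁ c₂ o p (1-τ) τ (by ring)]
      rw [hτdef]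
      field_simp
      ring
    obtain ⟨s, t, hs, ht, hst, hq'⟩ := chordP q ((mem_iff_normSq q c₂ r hr.le).mp hq2) hFq
    -- p - o = (1/τ)(q - o) = (s/τ) A + (t/τ) B
    have hqo : q - o = ((τ:ℝ):ℂ) * (p - o) := by
      rw [hqdef]; push_cast; ring
    have hpo' : p - o = ((s/τ : ℝ):ℂ) * A + ((t/τ : ℝ):ℂ) * B := by
      have hτc : ((τ:ℝ):ℂ) ≠ 0 := by exact_mod_cast ne_of_gt hτpos
      have h1 : ((τ:ℝ):ℂ) * (p - o) = (s:ℂ)*A + (t:ℂ)*B := by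
        rw [← hqo, hq', hAdef, hBdef]
        have hstc : ((s:ℝ):ℂ) + ((t:ℝ):ℂ) = 1 := by exact_mod_cast congrArg (Complex.ofReal) hst
        push_cast
        push_cast at hstc
        linear_combination (o : ℂ) * hstc
      push_cast
      field_simp
      push_cast at h1
      linear_combination h1
    have hz : p - o ≠ 0 := sub_ne_zero.mpr hpo
    have hw : (p - o)/A ≠ 0 := div_ne_zero hz hA
    have hweq : (p - o)/A = ((s/τ : ℝ):ℂ) + ((t/τ : ℝ):ℂ) * (B/A) :=
      (decomp_iff A B (p-o) hA (s/τ) (t/τ)).mpr hpo'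
    have := (cone_iff' (B/A) ((p-o)/A) hC hw hδ0 hδπ).mp
      ⟨s/τ, t/τ, div_nonneg hs hτpos.le, div_nonneg ht hτpos.le, hweq⟩
    exact hnarg (Set.mem_Icc.mpr this)

lemma main_half (S : Finset ℂ) (r : ℝ) (hr : 0 < r) (c₁ c₂ o : ℂ)
    (hcover : (S : Set ℂ) ⊆ closedBall c₁ r ∪ closedBall c₂ r)
    (ho : o ∈ closedBall c₁ r ∩ closedBall c₂ r)
    (hle : Complex.normSq (o - c₁) ≤ Complex.normSq (o - c₂)) :
    ∃ S₁ S₂ : Finset ℂ, S₁ ∪ S₂ = S ∧ Disjoint S₁ S₂ ∧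
      (S₁ : Set ℂ) ⊆ closedBall c₁ r ∧ (S₂ : Set ℂ) ⊆ closedBall c₂ r ∧
      ∃ θ₁ θ₂ : ℝ, θ₁ ≤ θ₂ ∧ θ₂ ≤ θ₁ + 2 * π ∧
        (∀ p ∈ S₁, p ≠ o →
          ∃ θ ∈ Set.Icc θ₁ θ₂, ∃ ρ : ℝ, 0 < ρ ∧ p - o = ρ * Complex.exp (θ * Complex.I)) ∧
        (∀ p ∈ S₂, p ≠ o →
          ∃ θ ∈ Set.Icc θ₂ (θ₁ + 2 * π), ∃ ρ : ℝ, 0 < ρ ∧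
            p - o = ρ * Complex.exp (θ * Complex.I)) := by
  by_cases hcc : c₂ - c₁ = 0
  · -- both balls coincide
    have hcc' : c₂ = c₁ := by linear_combination hcc
    refine assembly S r c₁ c₂ o 1 0 one_ne_zero le_rfl Real.pi_pos.le ho.1 ?_ ?_
    · intro p hpS _ _
      rcases hcover hpS with h | h
      · rw [hcc']; exact h
      · exact h
    · intro p hpS _ _
      rcases hcover hpS with h | h
      · exact h
      · rw [← hcc']; exact h
  · rcases eq_or_lt_of_le hle with heq | hlt
    · -- o equidistant : half-plane split, A = -(I*v), δ = π
      have hFo : Fln c₁ c₂ o = 0 := by nlinarith [f_eq c₁ c₂ o]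
      have hA : -(Complex.I * (c₂ - c₁)) ≠ 0 := by
        simp [hcc, Complex.I_ne_zero]
      have hns : 0 < Complex.normSq (c₂ - c₁) := Complex.normSq_pos.mpr hcc
      refine assembly S r c₁ c₂ o (-(Complex.I * (c₂ - c₁))) π hA Real.pi_pos.le le_rfl ho.1 ?_ ?_
      · intro p hpS hpo harg
        rw [Set.mem_Icc] at harg
        have him : 0 ≤ ((p - o) / (-(Complex.I * (c₂ - c₁)))).im :=
          Complex.arg_nonneg_iff.mp harg.1
        rw [im_div_neg_I_mul] at him
        have hre : 0 ≤ ((p - o) * conj (c₂ - c₁)).re := by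
          by_contra hneg
          push_neg at hneg
          have : ((p - o) * conj (c₂ - c₁)).re / Complex.normSq (c₂ - c₁) < 0 :=
            div_neg_of_neg_of_pos hneg hns
          linarith
        have hFp : 0 ≤ Fln c₁ c₂ p := by
          have := F_sub c₁ c₂ p o
          rw [hFo] at this
          linarith
        rcases hcover hpS with h | h
        · rw [mem_iff_normSq _ _ _ hr.le] at h ⊢
          nlinarith [f_eq c₁ c₂ p]
        · exact h
      · intro p hpS hpo hnarg
        rw [Set.mem_Icc, not_and_or, not_le, not_le] at hnarg
        have harglt : ((p - o) / (-(Complex.I * (c₂ - c₁)))).arg < 0 := by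
          rcases hnarg with h | h
          · exact h
          · exact absurd (Complex.arg_le_pi _) (not_le.mpr h)
        have him : ((p - o) / (-(Complex.I * (c₂ - c₁)))).im < 0 := by
          by_contra hge
          push_neg at hge
          exact absurd (Complex.arg_nonneg_iff.mpr hge) (not_le.mpr harglt)
        rw [im_div_neg_I_mul] at him
        have hre : ((p - o) * conj (c₂ - c₁)).re < 0 := by
          by_contra hge
          push_neg at hge
          have : 0 ≤ ((p - o) * conj (c₂ - c₁)).re / Complex.normSq (c₂ - c₁) :=
            div_nonneg hge hns.le
          linarith
        have hFp : Fln c₁ c₂ p < 0 := by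
          have := F_sub c₁ c₂ p o
          rw [hFo] at this
          linarith
        rcases hcover hpS with h | h
        · exact h
        · rw [mem_iff_normSq _ _ _ hr.le] at h ⊢
          nlinarith [f_eq c₁ c₂ p]
    · -- strict case
      have hFo : Fln c₁ c₂ o < 0 := by nlinarith [f_eq c₁ c₂ o]
      have hdpos : 0 < ‖(c₂ - c₁)‖ := by simpa using hcc
      have hd2r : ‖(c₂ - c₁)‖ ≤ 2 * r := by
        have h1 : ‖(o - c₁)‖ ≤ r := by
          have := ho.1; rwa [mem_closedBall, Complex.dist_eq] at this
        have h2 : ‖(o - c₂)‖ ≤ r := by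
          have := ho.2; rwa [mem_closedBall, Complex.dist_eq] at this
        calc ‖(c₂ - c₁)‖ = ‖((o - c₁) - (o - c₂))‖ := by ring_nf
          _ ≤ ‖(o - c₁)‖ + ‖(o - c₂)‖ := by
              exact (norm_sub_le _ _)
          _ ≤ 2 * r := by linarith
      have hsq : 0 ≤ r^2 - (‖(c₂ - c₁)‖)^2/4 := by nlinarith
      set h := Real.sqrt (r^2 - (‖(c₂ - c₁)‖)^2/4) with hhdef
      have hh0 : 0 ≤ h := Real.sqrt_nonneg _
      have hh2 : h^2 = r^2 - (‖(c₂ - c₁)‖)^2/4 := Real.sq_sqrt hsq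
      set a : ℂ := (c₁ + c₂)/2
        + ((h/‖(c₂ - c₁)‖ : ℝ) : ℂ) * (Complex.I * (c₂ - c₁)) with hadef
      set b : ℂ := (c₁ + c₂)/2
        - ((h/‖(c₂ - c₁)‖ : ℝ) : ℂ) * (Complex.I * (c₂ - c₁)) with hbdef
      obtain ⟨ha2', ha1'⟩ := ab_on_circle c₁ c₂ r h hcc hh2 1 (Or.inl rfl)
      obtain ⟨hb2', hb1'⟩ := ab_on_circle c₁ c₂ r h hcc hh2 (-1) (Or.inr rfl)
      have harw : (c₁ + c₂)/2
          + ((1*h/‖(c₂ - c₁)‖ : ℝ) : ℂ) * (Complex.I * (c₂ - c₁)) = a := by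
        rw [hadef]; norm_num
      have hbrw : (c₁ + c₂)/2
          + ((-1*h/‖(c₂ - c₁)‖ : ℝ) : ℂ) * (Complex.I * (c₂ - c₁)) = b := by
        rw [hbdef]; push_cast; ring
      rw [harw] at ha2' ha1'
      rw [hbrw] at hb2' hb1'
      have ha2 : a ∈ closedBall c₂ r := (mem_iff_normSq a c₂ r hr.le).mpr (le_of_eq ha2')
      have hb2 : b ∈ closedBall c₂ r := (mem_iff_normSq b c₂ r hr.le).mpr (le_of_eq hb2')
      have hFa : Fln c₁ c₂ a = 0 := by nlinarith [f_eq c₁ c₂ a]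
      have hFb : Fln c₁ c₂ b = 0 := by nlinarith [f_eq c₁ c₂ b]
      have chordP : ∀ z, Complex.normSq (z - c₂) ≤ r^2 → Fln c₁ c₂ z = 0 →
          ∃ s t : ℝ, 0 ≤ s ∧ 0 ≤ t ∧ s + t = 1 ∧ z = (s:ℂ)*a + (t:ℂ)*b := by
        intro z hz2 hzL
        obtain ⟨s, t, hs, ht, hst, hzeq⟩ := chord c₁ c₂ r h hcc hh0 hh2 z hz2 hzL
        exact ⟨s, t, hs, ht, hst, by rw [hzeq, hadef, hbdef]⟩
      have chordP' : ∀ z, Complex.normSq (z - c₂) ≤ r^2 → Fln c₁ c₂ z = 0 →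
          ∃ s t : ℝ, 0 ≤ s ∧ 0 ≤ t ∧ s + t = 1 ∧ z = (s:ℂ)*b + (t:ℂ)*a := by
        intro z hz2 hzL
        obtain ⟨s, t, hs, ht, hst, hzeq⟩ := chordP z hz2 hzL
        exact ⟨t, s, ht, hs, by linarith, by rw [hzeq]; ring⟩
      have hA0 : a - o ≠ 0 := by
        intro hcon
        rw [sub_eq_zero] at hcon
        rw [← hcon, hFa] at hFo
        exact lt_irrefl 0 hFo
      have hB0 : b - o ≠ 0 := by
        intro hcon
        rw [sub_eq_zero] at hcon
        rw [← hcon, hFb] at hFo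
        exact lt_irrefl 0 hFo
      have hne_pi : ((b - o)/(a - o)).arg ≠ π := by
        intro hpi
        obtain ⟨hre, him⟩ := Complex.arg_eq_pi_iff.mp hpi
        set t0 : ℝ := ((b - o)/(a - o)).re with ht0
        have hdiv : (b - o)/(a - o) = (t0 : ℂ) := Complex.ext rfl (by simp [him])
        have hb_eq : b - o = (t0 : ℂ) * (a - o) := by
          rw [div_eq_iff hA0] at hdiv
          exact hdiv
        have h1t0 : (1 - t0) ≠ 0 := by intro hc; rw [ht0] at hre; nlinarith [hre]
        have ho_eq : o = ((-t0/(1-t0) : ℝ):ℂ) * a + ((1/(1-t0) : ℝ):ℂ) * b := by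
          have h1t0c : ((1 - t0 : ℝ):ℂ) ≠ 0 := by exact_mod_cast h1t0
          push_cast
          push_cast at h1t0c
          rw [div_mul_eq_mul_div, div_mul_eq_mul_div, ← add_div, eq_div_iff h1t0c]
          linear_combination (-1:ℂ) * hb_eq
        have hcomb := F_comb c₁ c₂ a b (-t0/(1-t0)) (1/(1-t0)) (by field_simp; ring)
        rw [← ho_eq, hFa, hFb] at hcomb
        simp at hcomb
        rw [hcomb] at hFo
        exact lt_irrefl 0 hFo
      rcases le_or_gt 0 ((b - o)/(a - o)).arg with hpos | hneg
      · exact core S r hr c₁ c₂ o a b hcover ho ha2 hb2 hFa hFb hFo chordP hpos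
          (lt_of_le_of_ne (Complex.arg_le_pi _) hne_pi)
      · have hinv : (a - o)/(b - o) = ((b - o)/(a - o))⁻¹ := (inv_div _ _).symm
        have harg_inv : ((a - o)/(b - o)).arg = - ((b - o)/(a - o)).arg := by
          rw [hinv, Complex.arg_inv]
          rw [if_neg]
          intro hc
          exact absurd hc (by intro h'; linarith [Real.pi_pos, hneg, h' ▸ hneg])
        have hδ0' : 0 ≤ ((a - o)/(b - o)).arg := by rw [harg_inv]; linarith
        have hδπ' : ((a - o)/(b - o)).arg < π := by
          rw [harg_inv]
          have := Complex.neg_pi_lt_arg ((b - o)/(a - o))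
          linarith
        exact core S r hr c₁ c₂ o b a hcover ho hb2 ha2 hFb hFa hFo chordP' hδ0' hδπ'

end TwoRaysAux



/-- If a finite planar point set `S` is covered by two congruent closed disks
`D₁ = D(c₁,r)`, `D₂ = D(c₂,r)` whose intersection contains a point `o`, then `S` can be
partitioned into `S₁ ⊆ D₁` and `S₂ ⊆ D₂` that are angularly separated around `o` by two rays
`μ₁, μ₂` emanating from `o` (at angles `θ₁` and `θ₂`): every point of `S₁ \ {o}` lies in the
closed wedge of directions with angles in `[θ₁, θ₂]` and every point of `S₂ \ {o}` lies in the
complementary closed wedge `[θ₂, θ₁ + 2π]`. (The plane is modelled by `ℂ`.) -/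
theorem two_rays_separate_cover (S : Finset ℂ) (r : ℝ) (hr : 0 < r) (c₁ c₂ o : ℂ)
    (hcover : (S : Set ℂ) ⊆ closedBall c₁ r ∪ closedBall c₂ r)
    (ho : o ∈ closedBall c₁ r ∩ closedBall c₂ r) :
    ∃ S₁ S₂ : Finset ℂ, S₁ ∪ S₂ = S ∧ Disjoint S₁ S₂ ∧
      (S₁ : Set ℂ) ⊆ closedBall c₁ r ∧ (S₂ : Set ℂ) ⊆ closedBall c₂ r ∧
      ∃ θ₁ θ₂ : ℝ, θ₁ ≤ θ₂ ∧ θ₂ ≤ θ₁ + 2 * π ∧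
        (∀ p ∈ S₁, p ≠ o →
          ∃ θ ∈ Set.Icc θ₁ θ₂, ∃ ρ : ℝ, 0 < ρ ∧ p - o = ρ * Complex.exp (θ * Complex.I)) ∧
        (∀ p ∈ S₂, p ≠ o →
          ∃ θ ∈ Set.Icc θ₂ (θ₁ + 2 * π), ∃ ρ : ℝ, 0 < ρ ∧
            p - o = ρ * Complex.exp (θ * Complex.I)) := by
  rcases le_total (Complex.normSq (o - c₁)) (Complex.normSq (o - c₂)) with hle | hle
  · exact main_half S r hr c₁ c₂ o hcover ho hle
  · have hcover' : (S : Set ℂ) ⊆ closedBall c₂ r ∪ closedBall c₁ r := by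
      rw [Set.union_comm]; exact hcover
    have ho' : o ∈ closedBall c₂ r ∩ closedBall c₁ r := ⟨ho.2, ho.1⟩
    obtain ⟨T₁, T₂, hu, hdis, hT1c, hT2c, η₁, η₂, hη12, hη2, hA1, hA2⟩ :=
      main_half S r hr c₂ c₁ o hcover' ho' hle
    refine ⟨T₂, T₁, ?_, hdis.symm, hT2c, hT1c, η₂, η₁ + 2*π, hη2, by linarith, ?_, ?_⟩
    · rw [Finset.union_comm]; exact hu
    · exact hA2
    · intro p hp hpo
      obtain ⟨θ, hθ, ρ, hρ, heq⟩ := hA1 p hp hpo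
      rw [Set.mem_Icc] at hθ
      refine ⟨θ + 2*π, Set.mem_Icc.mpr ⟨by linarith [hθ.1], by linarith [hθ.2]⟩, ρ, hρ, ?_⟩
      rw [show ((θ + 2*π : ℝ) : ℂ) * Complex.I = (↑(θ + 2*π)) * Complex.I from rfl,
        exp_add_two_pi θ]
      exact heq
end

section
/- Let R = (r_{ij}) be defined by r_{ij} = max(A[i,j], B[i,j]) where A[i,j] is non-increasing in i and non-decreasing in j, and B[i,j] is non-decreasing in i and non-increasing in j. Let j(i) be a minimizing index of j ↦ r_{ij}. Then the matrix R is monotone: one can choose the minimizers so that i_1 > i_2 implies j(i_1) ≥ j(i_2). -/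
/-- Let `r i j = max (A i j) (B i j)` where `A` is non-increasing in `i` and
non-decreasing in `j`, while `B` is non-decreasing in `i` and non-increasing in `j`, on the
index range `0..n`. Then the matrix `(r i j)` is monotone: one can choose a minimizer
`J i ∈ argmin_j r i j` for each row `i` so that `i₂ < i₁` implies `J i₂ ≤ J i₁`. -/
theorem monotone_matrix_minimizers (n : ℕ) (A B : ℕ → ℕ → ℝ)
    (hAi : ∀ i i' j, i ≤ i' → i' ≤ n → j ≤ n → A i' j ≤ A i j)
    (hAj : ∀ i j j', j ≤ j' → i ≤ n → j' ≤ n → A i j ≤ A i j')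
    (hBi : ∀ i i' j, i ≤ i' → i' ≤ n → j ≤ n → B i j ≤ B i' j)
    (hBj : ∀ i j j', j ≤ j' → i ≤ n → j' ≤ n → B i j' ≤ B i j) :
    ∃ J : ℕ → ℕ,
      (∀ i, i ≤ n → J i ≤ n ∧
        ∀ j, j ≤ n → max (A i (J i)) (B i (J i)) ≤ max (A i j) (B i j)) ∧
      (∀ i₁ i₂, i₂ < i₁ → i₁ ≤ n → J i₂ ≤ J i₁) := by
  classical
  set r : ℕ → ℕ → ℝ := fun i j => max (A i j) (B i j) with hrdef
  have exmin : ∀ i l, l ≤ n →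
      ∃ j, l ≤ j ∧ j ≤ n ∧ ∀ k, l ≤ k → k ≤ n → r i j ≤ r i k := by
    intro i l hl
    obtain ⟨j, hj, hmin⟩ := Finset.exists_min_image (Finset.Icc l n) (r i)
      ⟨l, Finset.mem_Icc.mpr ⟨le_rfl, hl⟩⟩
    rw [Finset.mem_Icc] at hj
    exact ⟨j, hj.1, hj.2, fun k h1 h2 => hmin k (Finset.mem_Icc.mpr ⟨h1, h2⟩)⟩
  let pick : ℕ → ℕ → ℕ := fun i l =>
    if h : ∃ j, l ≤ j ∧ j ≤ n ∧ ∀ k, l ≤ k → k ≤ n → r i j ≤ r i k then Nat.find h else l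
  have pick_spec : ∀ i l, l ≤ n →
      l ≤ pick i l ∧ pick i l ≤ n ∧ (∀ k, l ≤ k → k ≤ n → r i (pick i l) ≤ r i k) ∧
       ∀ j', l ≤ j' → j' < pick i l → r i (pick i l) < r i j' := by
    intro i l hl
    have h := exmin i l hl
    simp only [pick, dif_pos h]
    have hp := Nat.find_spec h
    refine ⟨hp.1, hp.2.1, hp.2.2, ?_⟩
    intro j' hlj' hj'
    have hnot := Nat.find_min h hj'
    push_neg at hnot
    have hj'n : j' ≤ n := le_trans (le_of_lt hj') hp.2.1
    obtain ⟨k, hk1, hk2, hk3⟩ := hnot hlj' hj'n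
    exact lt_of_le_of_lt (hp.2.2 k hk1 hk2) hk3
  let J : ℕ → ℕ := fun i => Nat.rec (pick 0 0) (fun i' prev => pick (i' + 1) prev) i
  have hJs : ∀ i, J (i + 1) = pick (i + 1) (J i) := fun i => rfl
  have key : ∀ i, i ≤ n → J i ≤ n ∧ (∀ j, j ≤ n → r i (J i) ≤ r i j) ∧
      (∀ j', j' < J i → r i (J i) ≤ B i j') := by
    intro i
    induction i with
    | zero =>
      intro _
      obtain ⟨h1, h2, h3, h4⟩ := pick_spec 0 0 (Nat.zero_le n)
      refine ⟨h2, fun j hj => h3 j (Nat.zero_le j) hj, ?_⟩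
      intro j' hj'
      have hj'n : j' ≤ n := le_trans (le_of_lt hj') h2
      have hstrict : r 0 (J 0) < r 0 j' := h4 j' (Nat.zero_le j') hj'
      have hA : A 0 j' ≤ r 0 (J 0) :=
        le_trans (hAj 0 j' (J 0) (le_of_lt hj') (Nat.zero_le n) h2) (le_max_left _ _)
      have hrB : r 0 j' ≤ B 0 j' := by
        rcases le_total (A 0 j') (B 0 j') with hc | hc
        · exact max_le hc le_rfl
        · exfalso
          have : r 0 j' = A 0 j' := max_eq_left hc
          rw [this] at hstrict
          linarith
      linarith
    | succ i ih =>
      intro hsn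
      have hin : i ≤ n := le_trans (Nat.le_succ i) hsn
      obtain ⟨hJn, hmin, hB⟩ := ih hin
      obtain ⟨hle, hm'n, hmin', hstrict'⟩ := pick_spec (i + 1) (J i) hJn
      rw [← hJs i] at hle hm'n hmin' hstrict'
      -- Fact F: for j' < J i, r (i+1) (J (i+1)) ≤ B (i+1) j'
      have F : ∀ j', j' < J i → r (i + 1) (J (i + 1)) ≤ B (i + 1) j' := by
        intro j' hj'
        have hj'n : j' ≤ n := le_trans (le_of_lt hj') hJn
        have h1 : B i j' ≤ B (i + 1) j' := hBi i (i + 1) j' (Nat.le_succ i) hsn hj'n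
        have h2 : r i (J i) ≤ B i j' := hB j' hj'
        have h3 : A (i + 1) (J i) ≤ A i (J i) := hAi i (i + 1) (J i) (Nat.le_succ i) hsn hJn
        have h4 : A i (J i) ≤ r i (J i) := le_max_left _ _
        have h5 : B (i + 1) (J i) ≤ B (i + 1) j' := hBj (i + 1) j' (J i) (le_of_lt hj') hsn hJn
        have h6 : r (i + 1) (J i) ≤ B (i + 1) j' := max_le (by linarith) h5
        exact le_trans (hmin' (J i) le_rfl hJn) h6
      refine ⟨hm'n, ?_, ?_⟩
      · intro j hjn
        rcases le_or_gt (J i) j with h | h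
        · exact hmin' j h hjn
        · exact le_trans (F j h) (le_max_right _ _)
      · intro j' hj'
        rcases lt_or_ge j' (J i) with h | h
        · exact F j' h
        · have hj'n : j' ≤ n := le_trans (le_of_lt hj') hm'n
          have hstrict : r (i + 1) (J (i + 1)) < r (i + 1) j' := hstrict' j' h hj'
          have hA : A (i + 1) j' ≤ r (i + 1) (J (i + 1)) :=
            le_trans (hAj (i + 1) j' (J (i + 1)) (le_of_lt hj') hsn hm'n) (le_max_left _ _)
          have hrB : r (i + 1) j' ≤ B (i + 1) j' := by
            rcases le_total (A (i + 1) j') (B (i + 1) j') with hc | hc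
            · exact max_le hc le_rfl
            · exfalso
              have : r (i + 1) j' = A (i + 1) j' := max_eq_left hc
              rw [this] at hstrict
              linarith
          linarith
  have mono1 : ∀ i, i + 1 ≤ n → J i ≤ J (i + 1) := by
    intro i h
    have hJn : J i ≤ n := (key i (le_trans (Nat.le_succ i) h)).1
    have := (pick_spec (i + 1) (J i) hJn).1
    rw [← hJs i] at this
    exact this
  refine ⟨J, fun i hi => ⟨(key i hi).1, fun j hj => (key i hi).2.1 j hj⟩, ?_⟩
  intro i₁
  induction i₁ with
  | zero => intro i₂ h _; exact absurd h (Nat.not_lt_zero i₂)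
  | succ k ihk =>
    intro i₂ h hle
    have hkn : k ≤ n := le_trans (Nat.le_succ k) hle
    have h2 : J i₂ ≤ J k := by
      rcases Nat.lt_succ_iff_lt_or_eq.mp h with h' | h'
      · exact ihk i₂ h' hkn
      · rw [h']
    exact le_trans h2 (mono1 k hle)
end

section
/- Let S be a finite set of points in the plane in convex position. Then there exists an optimal solution (D_1, D_2) to the 2-center problem on S (two congruent disks of minimum radius covering S) such that the points of S covered by D_1 form a set of consecutive vertices along the boundary of the convex hull of S. -/
open Metric

/-- The planar cross product of two vectors (the plane modelled by `ℂ`). -/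
def cross (z w : ℂ) : ℝ := z.re * w.im - z.im * w.re

lemma cross_rot (a b c : ℂ) : cross (b - a) (c - a) = cross (c - b) (a - b) := by
  unfold cross; simp [Complex.sub_re, Complex.sub_im]; ring

lemma cross_affine (v A X Y : ℂ) (t : ℝ) :
    cross v (X + (t:ℂ) * (Y - X) - A) =
      cross v (X - A) + t * (cross v (Y - A) - cross v (X - A)) := by
  unfold cross
  simp [Complex.add_re, Complex.add_im, Complex.sub_re, Complex.sub_im, Complex.mul_re,
    Complex.mul_im, Complex.ofReal_re, Complex.ofReal_im]
  ring

lemma dist_sq_affine (c X Y : ℂ) (t : ℝ) :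
    dist (X + (t:ℂ) * (Y - X)) c ^ 2 - ((1-t) * (dist X c ^2) + t * (dist Y c ^2))
    = (t^2 - t) * (dist X Y ^2) := by
  simp only [Complex.dist_eq, Complex.sq_norm, Complex.normSq_apply, Complex.add_re,
    Complex.add_im, Complex.sub_re, Complex.sub_im, Complex.mul_re, Complex.mul_im,
    Complex.ofReal_re, Complex.ofReal_im]
  ring

lemma f_affine (c₁ c₂ X Y : ℂ) (t : ℝ) :
    (dist (X + (t:ℂ) * (Y - X)) c₁ ^ 2 - dist (X + (t:ℂ) * (Y - X)) c₂ ^ 2)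
     = (1-t) * (dist X c₁ ^2 - dist X c₂ ^2) + t * (dist Y c₁ ^2 - dist Y c₂ ^2) := by
  have h1 := dist_sq_affine c₁ X Y t
  have h2 := dist_sq_affine c₂ X Y t
  nlinarith [h1, h2]

lemma cross_eq_zero_param (v w : ℂ) (hv : v ≠ 0) (h : cross v w = 0) :
    ∃ s : ℝ, w = (s:ℂ) * v := by
  have hns : (0:ℝ) < v.re^2 + v.im^2 := by
    have := Complex.normSq_pos.mpr hv
    rw [Complex.normSq_apply] at this
    nlinarith
  unfold cross at h
  have key : w * (((v.re^2+v.im^2 : ℝ)) : ℂ) = (((v.re*w.re + v.im*w.im : ℝ)) : ℂ) * v := by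
    apply Complex.ext
    · simp only [Complex.mul_re, Complex.mul_im, Complex.ofReal_re, Complex.ofReal_im]
      linear_combination (-v.im) * h
    · simp only [Complex.mul_re, Complex.mul_im, Complex.ofReal_re, Complex.ofReal_im]
      linear_combination v.re * h
  refine ⟨(v.re*w.re + v.im*w.im)/(v.re^2+v.im^2), ?_⟩
  rw [Complex.ofReal_div, div_mul_eq_mul_div, eq_div_iff (by exact_mod_cast ne_of_gt hns)]
  exact key

lemma cross_antisymm (u v : ℂ) : cross u v = - cross v u := by unfold cross; ring

lemma cross_smul_self (v : ℂ) (t : ℝ) : cross v ((t:ℂ) * v) = 0 := by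
  unfold cross
  simp [Complex.mul_re, Complex.mul_im]
  ring

lemma core_lemma (A B C D c₁ c₂ : ℂ)
    (e₁ : 0 < cross (B-A) (C-A)) (e₂ : 0 < cross (B-A) (D-A))
    (e₃ : 0 < cross (C-A) (D-A)) (e₄ : 0 < cross (C-B) (D-B))
    (hA : dist A c₁ ≤ dist A c₂) (hC : dist C c₁ ≤ dist C c₂)
    (hB : dist B c₂ < dist B c₁) (hD : dist D c₂ < dist D c₁) : False := by
  set f : ℂ → ℝ := fun z => dist z c₁^2 - dist z c₂^2 with hf
  have fA : f A ≤ 0 := by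
    simp only [hf, sub_nonpos]
    exact pow_le_pow_left₀ dist_nonneg hA 2
  have fC : f C ≤ 0 := by
    simp only [hf, sub_nonpos]
    exact pow_le_pow_left₀ dist_nonneg hC 2
  have fB : 0 < f B := by
    simp only [hf, sub_pos]
    exact pow_lt_pow_left₀ hB dist_nonneg (by norm_num)
  have fD : 0 < f D := by
    simp only [hf, sub_pos]
    exact pow_lt_pow_left₀ hD dist_nonneg (by norm_num)
  set x : ℝ := cross (B-A) (C-A) with hx
  set y : ℝ := cross (C-A) (D-A) with hy
  set t : ℝ := x / (x + y) with htdef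
  have hsumpos : (0:ℝ) < x + y := by linarith
  have ht0 : 0 < t := div_pos e₁ hsumpos
  have ht1 : t < 1 := by
    rw [htdef, div_lt_one hsumpos]; linarith
  set m : ℂ := B + (t:ℂ) * (D - B) with hmdef
  have gm : cross (C-A) (m - A) = 0 := by
    rw [hmdef, cross_affine (C-A) A B D t]
    have h1 : cross (C-A) (B-A) = - x := by rw [hx]; exact cross_antisymm _ _
    rw [h1, ← hy, htdef]
    field_simp
    ring
  have hCA : C - A ≠ 0 := by
    intro h0
    rw [hy, h0] at e₃
    unfold cross at e₃
    simp at e₃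
  obtain ⟨s, hs⟩ := cross_eq_zero_param (C-A) (m-A) hCA gm
  have hm2 : m = A + (s:ℂ) * (C-A) := by
    rw [← hs]; ring
  have hm3 : cross (D-B) (m - B) = 0 := by
    have h2 : m - B = (t:ℂ) * (D-B) := by rw [hmdef]; ring
    rw [h2]
    exact cross_smul_self _ _
  have hm4 : cross (D-B) (m - B) = cross (D-B) (A-B) + s * (cross (D-B) (C-B) - cross (D-B) (A-B)) := by
    have h3 : m - B = A + (s:ℂ) * (C - A) - B := by rw [hm2]
    rw [h3, ← cross_affine (D-B) B A C s]
  have hDBAB : cross (D-B) (A-B) = cross (B-A) (D-A) := (cross_rot A B D).symm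
  have hDBCB : cross (D-B) (C-B) = - cross (C-B) (D-B) := cross_antisymm _ _
  have hseq : 0 = cross (B-A) (D-A) + s * (- cross (C-B) (D-B) - cross (B-A) (D-A)) := by
    rw [← hDBAB, ← hDBCB, ← hm4, hm3]
  have hs0 : 0 ≤ s := by nlinarith
  have hs1 : s ≤ 1 := by nlinarith
  have fm1 : f m = (1-t) * f B + t * f D := by
    rw [hmdef]
    exact f_affine c₁ c₂ B D t
  have fm2 : f m = (1-s) * f A + s * f C := by
    rw [hm2]
    exact f_affine c₁ c₂ A C s
  have p1 : 0 < (1-t) * f B := mul_pos (by linarith) fB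
  have p2 : 0 < t * f D := mul_pos ht0 fD
  have p3 : (1-s) * f A ≤ 0 := mul_nonpos_of_nonneg_of_nonpos (by linarith) fA
  have p4 : s * f C ≤ 0 := mul_nonpos_of_nonneg_of_nonpos hs0 fC
  linarith

noncomputable def akey (v : ℂ) : ℝ := v.im / (v.re + ‖v‖)

lemma akey_facts (v : ℂ) (hv : v ≠ 0) (hva : 0 ≤ v.re) (hvb : v.re = 0 → 0 < v.im) :
    0 < ‖v‖ ∧
      v.re * (1 + akey v^2) = ‖v‖ * (1 - akey v^2) ∧
      v.im * (1 + akey v^2) = 2 * ‖v‖ * akey v ∧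
      -1 < akey v ∧ akey v ≤ 1 := by
  set a := v.re with hadef
  set b := v.im
  set R := ‖v‖ with hRdef
  have hRpos : 0 < R := norm_pos_iff.mpr hv
  have hR2 : R^2 = a^2 + b^2 := by
    rw [hRdef, Complex.sq_norm, Complex.normSq_apply]; ring
  have haR : 0 < a + R := by linarith
  set t := akey v with htdef
  have ht₁ : t * (a + R) = b := by
    rw [htdef]; unfold akey; exact div_mul_cancel₀ _ (ne_of_gt haR)
  have hsq : t^2 * (a + R) = R - a := by
    have h2 : (t^2*(a+R))*(a+R) = (R-a)*(a+R) := by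
      linear_combination (t*(a+R)+b)*ht₁ - hR2
    exact mul_right_cancel₀ (ne_of_gt haR) h2
  have A1 : a*(1+t^2) = R*(1-t^2) := by linear_combination hsq
  have B1 : b*(1+t^2) = 2*R*t := by linear_combination (-(1+t^2))*ht₁ + t*hsq
  have ht2le : t^2 ≤ 1 := by nlinarith
  have htle : t ≤ 1 := by nlinarith [sq_nonneg (t-1)]
  have htgt : -1 < t := by
    by_contra hc
    push_neg at hc
    have hteq : t = -1 := by nlinarith
    have ha0 : a = 0 := by
      rw [hteq] at hsq; nlinarith
    have hb0 : 0 < b := hvb ha0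
    rw [hteq, ha0] at ht₁
    nlinarith
  exact ⟨hRpos, A1, B1, htgt, htle⟩

lemma cross_akey (v w : ℂ) (hv : v ≠ 0) (hw : w ≠ 0)
    (hva : 0 ≤ v.re) (hvb : v.re = 0 → 0 < v.im)
    (hwa : 0 ≤ w.re) (hwb : w.re = 0 → 0 < w.im) :
    (0 < cross v w ↔ akey v < akey w) ∧ (cross v w = 0 ↔ akey v = akey w) := by
  obtain ⟨hR, A1, B1, h1, h2⟩ := akey_facts v hv hva hvb
  obtain ⟨hT, A2, B2, h3, h4⟩ := akey_facts w hw hwa hwb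
  set a := v.re; set b := v.im; set c := w.re; set d := w.im
  set R := ‖v‖; set T := ‖w‖
  set t₁ := akey v; set t₂ := akey w
  have key_eq : (cross v w) * ((1+t₁^2)*(1+t₂^2)) = 2*R*T*(t₂-t₁)*(1+t₁*t₂) := by
    unfold cross
    linear_combination (d*(1+t₂^2))*A1 + (R*(1-t₁^2))*B2 - (c*(1+t₂^2))*B1 - (2*R*t₁)*A2
  have hP : (0:ℝ) < (1+t₁^2)*(1+t₂^2) := by positivity
  have hQ : (0:ℝ) < 2*R*T*(1+t₁*t₂) := by
    have : 0 < 1 + t₁*t₂ := by nlinarith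
    positivity
  constructor
  · constructor
    · intro h
      nlinarith
    · intro h
      nlinarith
  · constructor
    · intro h
      nlinarith
    · intro h
      have hz : cross v w * ((1+t₁^2)*(1+t₂^2)) = 0 := by rw [key_eq, h]; ring
      rcases mul_eq_zero.mp hz with h'|h'
      · exact h'
      · exact absurd h' (ne_of_gt hP)

lemma mem_seg (X Y : ℂ) (θ : ℝ) (h0 : 0 ≤ θ) (h1 : θ ≤ 1) :
    X + (θ:ℂ) * (Y - X) ∈ segment ℝ X Y := by
  rw [segment_eq_image']
  exact ⟨θ, ⟨h0, h1⟩, by simp [Complex.real_smul]⟩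

lemma no_three_collinear {S : Finset ℂ}
    (hconv : ∀ p ∈ S, p ∉ convexHull ℝ ((S : Set ℂ) \ {p}))
    {p q x : ℂ} (hp : p ∈ S) (hq : q ∈ S) (hx : x ∈ S)
    (hpq : p ≠ q) (hpx : p ≠ x) (hqx : q ≠ x)
    (h : cross (q - p) (x - p) = 0) : False := by
  have hqp : q - p ≠ 0 := sub_ne_zero.mpr hpq.symm
  obtain ⟨s, hs⟩ := cross_eq_zero_param (q-p) (x-p) hqp h
  have hx_eq : x = p + (s:ℂ) * (q - p) := by rw [← hs]; ring
  have hs0 : s ≠ 0 := by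
    intro h0; rw [h0] at hx_eq; simp at hx_eq; exact hpx hx_eq.symm
  have hs1 : s ≠ 1 := by
    intro h0; rw [h0] at hx_eq; simp at hx_eq
    exact hqx (by linear_combination -hx_eq)
  rcases lt_trichotomy s 0 with hlt | heq | hgt
  · -- p between x and q
    have h1s : (0:ℝ) < 1 - s := by linarith
    have hfac : ((-s/(1-s):ℝ):ℂ) * ((1:ℂ) - (s:ℂ)) = -(s:ℂ) := by
      have h1sc : (1:ℂ) - (s:ℂ) ≠ 0 := by
        rw [sub_ne_zero]
        exact_mod_cast (Ne.symm (ne_of_lt (by linarith : s < 1)))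
      push_cast
      rw [div_mul_cancel₀ _ h1sc]
    have h2 : q - x = ((1:ℂ) - (s:ℂ)) * (q - p) := by rw [hx_eq]; ring
    have key : p = x + ((-s/(1-s):ℝ):ℂ) * (q - x) := by
      rw [h2, ← mul_assoc, hfac, hx_eq]; ring
    have hmem : p ∈ segment ℝ x q := by
      rw [key]
      apply mem_seg
      · exact div_nonneg (by linarith) (by linarith)
      · rw [div_le_one h1s]; linarith
    have hx' : x ∈ ((S : Set ℂ) \ {p}) :=
      ⟨hx, by simp only [Set.mem_singleton_iff]; exact Ne.symm hpx⟩
    have hq' : q ∈ ((S : Set ℂ) \ {p}) :=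
      ⟨hq, by simp only [Set.mem_singleton_iff]; exact Ne.symm hpq⟩
    exact hconv p hp (segment_subset_convexHull hx' hq' hmem)
  · exact hs0 heq
  · rcases lt_trichotomy s 1 with hlt1 | heq1 | hgt1
    · -- x between p and q
      have hmem : x ∈ segment ℝ p q := by
        rw [hx_eq]
        exact mem_seg _ _ _ (le_of_lt hgt) (le_of_lt hlt1)
      have hp' : p ∈ ((S : Set ℂ) \ {x}) :=
        ⟨hp, by simp only [Set.mem_singleton_iff]; exact hpx⟩
      have hq' : q ∈ ((S : Set ℂ) \ {x}) :=
        ⟨hq, by simp only [Set.mem_singleton_iff]; exact hqx⟩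
      exact hconv x hx (segment_subset_convexHull hp' hq' hmem)
    · exact hs1 heq1
    · -- q between p and x
      have hspos : (0:ℝ) < s := hgt
      have hfac : ((1/s:ℝ):ℂ) * (s:ℂ) = 1 := by
        have hsc : (s:ℂ) ≠ 0 := by exact_mod_cast hs0
        push_cast
        field_simp
      have key : q = p + ((1/s:ℝ):ℂ) * (x - p) := by
        rw [hs, ← mul_assoc, hfac]; ring
      have hmem : q ∈ segment ℝ p x := by
        rw [key]
        apply mem_seg
        · positivity
        · rw [div_le_one hspos]; linarith
      have hp' : p ∈ ((S : Set ℂ) \ {q}) :=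
        ⟨hp, by simp only [Set.mem_singleton_iff]; exact hpq⟩
      have hx' : x ∈ ((S : Set ℂ) \ {q}) :=
        ⟨hx, by simp only [Set.mem_singleton_iff]; exact Ne.symm hqx⟩
      exact hconv q hq (segment_subset_convexHull hp' hx' hmem)

lemma mem_convexHull_triangle (A B C P : ℂ) (hΔ : 0 < cross (B-A) (C-A))
    (h1 : 0 ≤ cross (B-A) (P-A)) (h2 : 0 ≤ cross (C-B) (P-B))
    (h3 : 0 ≤ cross (A-C) (P-C)) :
    P ∈ convexHull ℝ ({A, B, C} : Set ℂ) := by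
  set Δ := cross (B-A) (C-A) with hΔdef
  set n₁ := cross (C-B) (P-B) with hn₁
  set n₂ := cross (A-C) (P-C) with hn₂
  set n₃ := cross (B-A) (P-A) with hn₃
  have hsum : n₁ + n₂ + n₃ = Δ := by
    rw [hn₁, hn₂, hn₃, hΔdef]; unfold cross
    simp only [Complex.sub_re, Complex.sub_im]; ring
  have hre : n₁ * A.re + n₂ * B.re + n₃ * C.re = Δ * P.re := by
    rw [hn₁, hn₂, hn₃, hΔdef]; unfold cross
    simp only [Complex.sub_re, Complex.sub_im]; ring
  have him : n₁ * A.im + n₂ * B.im + n₃ * C.im = Δ * P.im := by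
    rw [hn₁, hn₂, hn₃, hΔdef]; unfold cross
    simp only [Complex.sub_re, Complex.sub_im]; ring
  have hΔne : Δ ≠ 0 := ne_of_gt hΔ
  set w : Fin 3 → ℝ := ![n₁/Δ, n₂/Δ, n₃/Δ] with hw
  set z : Fin 3 → ℂ := ![A, B, C] with hz
  have hcombo := Convex.sum_mem (convex_convexHull ℝ ({A, B, C} : Set ℂ))
    (t := Finset.univ) (w := w) (z := z)
    (by
      intro i _
      fin_cases i <;> simp [hw] <;> positivity)
    (by
      simp [hw, Fin.sum_univ_three]
      field_simp
      linarith [hsum])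
    (by
      intro i _
      fin_cases i <;> simp [hz] <;> apply subset_convexHull <;> simp)
  have hPsum : ∑ i, w i • z i = P := by
    rw [Fin.sum_univ_three]
    simp only [hw, hz]
    simp only [Matrix.cons_val_zero, Matrix.cons_val_one, Matrix.head_cons,
      Matrix.cons_val_two, Matrix.tail_cons]
    apply Complex.ext
    · simp only [Complex.add_re, Complex.real_smul, Complex.mul_re, Complex.ofReal_re,
        Complex.ofReal_im]
      field_simp
      linear_combination hre
    · simp only [Complex.add_im, Complex.real_smul, Complex.mul_im, Complex.ofReal_re,
        Complex.ofReal_im]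
      field_simp
      linear_combination him
  rwa [hPsum] at hcombo

lemma cross_zero_right (v : ℂ) : cross v 0 = 0 := by unfold cross; simp

lemma cross_vv (v : ℂ) : cross v v = 0 := by unfold cross; ring

lemma exists_ccw (S : Finset ℂ) (n : ℕ) (hn : n = S.card) (hn2 : 2 ≤ n)
    (hconv : ∀ p ∈ S, p ∉ convexHull ℝ ((S : Set ℂ) \ {p})) :
    ∃ σ : ℕ → ℂ, (S : Set ℂ) = σ '' (Set.Iio n) ∧ Set.InjOn σ (Set.Iio n) ∧
      (∀ i j k, i < j → j < k → k < n → 0 < cross (σ j - σ i) (σ k - σ i)) := by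
  classical
  have hS : S.Nonempty := by rw [← Finset.card_pos, ← hn]; omega
  obtain ⟨m₁, hm₁S, hm₁⟩ := S.exists_min_image (fun z => z.re) hS
  have hS₁ : (S.filter (fun z => z.re = m₁.re)).Nonempty := ⟨m₁, by simp [hm₁S]⟩
  obtain ⟨p₀, hp₀f, hp₀min⟩ := (S.filter (fun z => z.re = m₁.re)).exists_min_image
    (fun z => z.im) hS₁
  have hp₀S : p₀ ∈ S := (Finset.mem_filter.mp hp₀f).1
  have hp₀re : p₀.re = m₁.re := (Finset.mem_filter.mp hp₀f).2
  have hmin_re : ∀ q ∈ S, p₀.re ≤ q.re := fun q hq => hp₀re ▸ hm₁ q hq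
  have hmin_im : ∀ q ∈ S, q.re = p₀.re → p₀.im ≤ q.im := fun q hq hqre =>
    hp₀min q (Finset.mem_filter.mpr ⟨hq, by rw [hqre, hp₀re]⟩)
  have hhalf : ∀ q ∈ S, q ≠ p₀ →
      (q - p₀ ≠ 0 ∧ 0 ≤ (q - p₀).re ∧ ((q - p₀).re = 0 → 0 < (q - p₀).im)) := by
    intro q hq hne
    refine ⟨sub_ne_zero.mpr hne, ?_, ?_⟩
    · rw [Complex.sub_re]; linarith [hmin_re q hq]
    · intro h0
      rw [Complex.sub_re] at h0
      have hre : q.re = p₀.re := by linarith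
      have him : p₀.im ≤ q.im := hmin_im q hq hre
      rw [Complex.sub_im]
      rcases lt_or_eq_of_le him with h | h
      · linarith
      · exfalso; exact hne (Complex.ext hre h.symm)
  set S' := S.erase p₀ with hS'def
  have hS'card : S'.card = n - 1 := by rw [hS'def, Finset.card_erase_of_mem hp₀S, ← hn]
  set kf : ℂ → ℝ := fun q => akey (q - p₀) with hkf
  have hinj : Set.InjOn kf S' := by
    intro q hq q' hq' heq
    by_contra hne
    have hqS : q ∈ S := Finset.mem_of_mem_erase hq
    have hq'S : q' ∈ S := Finset.mem_of_mem_erase hq'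
    have hqne : q ≠ p₀ := Finset.ne_of_mem_erase hq
    have hq'ne : q' ≠ p₀ := Finset.ne_of_mem_erase hq'
    obtain ⟨h1, h2, h3⟩ := hhalf q hqS hqne
    obtain ⟨h4, h5, h6⟩ := hhalf q' hq'S hq'ne
    have hcz : cross (q - p₀) (q' - p₀) = 0 :=
      ((cross_akey (q - p₀) (q' - p₀) h1 h4 h2 h3 h5 h6).2).mpr heq
    exact no_three_collinear hconv hp₀S hqS hq'S (Ne.symm hqne) (Ne.symm hq'ne) hne hcz
  set K : Finset ℝ := S'.image kf with hK
  have hKcard : K.card = n - 1 := by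
    rw [hK, Finset.card_image_of_injOn hinj, hS'card]
  set L : List ℝ := K.sort (· ≤ ·) with hL
  have hLlen : L.length = n - 1 := by rw [hL, Finset.length_sort, hKcard]
  set pick : ℝ → ℂ := fun x => if h : ∃ q, q ∈ S' ∧ kf q = x then h.choose else 0 with hpickdef
  have hpick : ∀ x ∈ K, pick x ∈ S' ∧ kf (pick x) = x := by
    intro x hx
    rw [hK, Finset.mem_image] at hx
    obtain ⟨q, hq, hqx⟩ := hx
    have hex : ∃ q, q ∈ S' ∧ kf q = x := ⟨q, hq, hqx⟩
    rw [hpickdef]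
    simp only [dif_pos hex]
    exact hex.choose_spec
  set l : List ℂ := p₀ :: (L.map pick) with hl
  have hlen : l.length = n := by
    rw [hl]
    simp only [List.length_cons, List.length_map]
    omega
  set σ : ℕ → ℂ := fun t => l.getD t 0 with hσ
  have hget : ∀ t (ht : t < n), σ t = l.get ⟨t, by rw [hlen]; exact ht⟩ := by
    intro t ht
    rw [hσ]
    exact List.getD_eq_get l 0 ⟨t, by rw [hlen]; exact ht⟩
  have hσ0 : σ 0 = p₀ := by rw [hσ]; rfl
  have hentry : ∀ t, 1 ≤ t → t < n → ∃ (hs : t - 1 < L.length),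
      σ t = pick (L.get ⟨t-1, hs⟩) := by
    intro t h1 ht
    have hs : t - 1 < L.length := by omega
    refine ⟨hs, ?_⟩
    obtain ⟨s, rfl⟩ : ∃ s, t = s + 1 := ⟨t - 1, by omega⟩
    rw [hσ, hl]
    simp only [List.getD_cons_succ]
    have hs' : s < (L.map pick).length := by simpa using hs
    rw [List.getD_eq_get _ 0 ⟨s, hs'⟩, List.get_eq_getElem, List.getElem_map]
    congr 1
  have hmemS' : ∀ t, 1 ≤ t → t < n →
      σ t ∈ S' ∧ ∀ (hs : t - 1 < L.length), kf (σ t) = L.get ⟨t-1, hs⟩ := by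
    intro t h1 ht
    obtain ⟨hs, heq⟩ := hentry t h1 ht
    have hmemK : L.get ⟨t-1, hs⟩ ∈ K := by
      rw [← Finset.mem_sort (α := ℝ) (· ≤ ·), ← hL]
      exact List.get_mem L _
    obtain ⟨hp1, hp2⟩ := hpick _ hmemK
    rw [heq]
    exact ⟨hp1, fun _ => hp2⟩
  have hLsorted : ∀ (i j : Fin L.length), i < j → L.get i < L.get j := by
    have : L.SortedLT := Finset.sortedLT_sort K
    exact fun i j hij => this.strictMono_get hij
  have hcrossp : ∀ i j, 1 ≤ i → i < j → j < n → 0 < cross (σ i - p₀) (σ j - p₀) := by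
    intro i j h1 hij hj
    obtain ⟨hiS', hikey'⟩ := hmemS' i h1 (by omega)
    obtain ⟨hjS', hjkey'⟩ := hmemS' j (by omega) hj
    have hsi : i - 1 < L.length := by rw [hLlen]; omega
    have hsj : j - 1 < L.length := by rw [hLlen]; omega
    have hikey := hikey' hsi
    have hjkey := hjkey' hsj
    have hiS : σ i ∈ S := Finset.mem_of_mem_erase hiS'
    have hjS : σ j ∈ S := Finset.mem_of_mem_erase hjS'
    have hine : σ i ≠ p₀ := Finset.ne_of_mem_erase hiS'
    have hjne : σ j ≠ p₀ := Finset.ne_of_mem_erase hjS'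
    obtain ⟨a1, a2, a3⟩ := hhalf _ hiS hine
    obtain ⟨b1, b2, b3⟩ := hhalf _ hjS hjne
    apply ((cross_akey _ _ a1 b1 a2 a3 b2 b3).1).mpr
    have : kf (σ i) < kf (σ j) := by
      rw [hikey, hjkey]
      exact hLsorted _ _ (by simp; omega)
    exact this
  -- nodup of l
  have hpickinj : ∀ x ∈ L, ∀ y ∈ L, pick x = pick y → x = y := by
    intro x hx y hy hxy
    have hxK : x ∈ K := by rwa [← Finset.mem_sort (α := ℝ) (· ≤ ·), ← hL]
    have hyK : y ∈ K := by rwa [← Finset.mem_sort (α := ℝ) (· ≤ ·), ← hL]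
    have := (hpick x hxK).2
    rw [hxy, (hpick y hyK).2] at this
    exact this.symm
  have hnodup : l.Nodup := by
    rw [hl, List.nodup_cons]
    constructor
    · intro hmem
      rw [List.mem_map] at hmem
      obtain ⟨x, hx, hpx⟩ := hmem
      have hxK : x ∈ K := by rwa [← Finset.mem_sort (α := ℝ) (· ≤ ·), ← hL]
      have := (hpick x hxK).1
      rw [hpx] at this
      exact Finset.ne_of_mem_erase this rfl
    · exact (Finset.sort_nodup K _).map_on hpickinj
  have hmapF : (L.map pick).toFinset = S' := by
    apply Finset.eq_of_subset_of_card_le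
    · intro z hz
      rw [List.mem_toFinset, List.mem_map] at hz
      obtain ⟨x, hx, rfl⟩ := hz
      have hxK : x ∈ K := by rwa [← Finset.mem_sort (α := ℝ) (· ≤ ·), ← hL]
      exact (hpick x hxK).1
    · have h1 : (L.map pick).toFinset.card = (L.map pick).length :=
        List.toFinset_card_of_nodup ((Finset.sort_nodup K _).map_on hpickinj)
      rw [hS'card, h1, List.length_map, hLlen]
  have htoF : l.toFinset = S := by
    rw [hl, List.toFinset_cons, hmapF, hS'def, Finset.insert_erase hp₀S]
  have himage : (S : Set ℂ) = σ '' (Set.Iio n) := by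
    ext z
    constructor
    · intro hz
      have : z ∈ l := by
        rw [← List.mem_toFinset, htoF]; exact_mod_cast hz
      obtain ⟨i, hi⟩ := List.mem_iff_get.mp this
      have h2 : (i : ℕ) < n := by have h3 := i.isLt; omega
      refine ⟨i, h2, ?_⟩
      rw [hget i h2]
      rw [← hi]
    · rintro ⟨t, ht, rfl⟩
      have ht' : t < n := ht
      rw [hget t ht']
      have : l.get ⟨t, by rw [hlen]; exact ht'⟩ ∈ l := List.get_mem l _
      rw [← List.mem_toFinset, htoF] at this
      exact_mod_cast this
  have hinjOn : Set.InjOn σ (Set.Iio n) := by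
    intro i hi j hj hij
    have hi' : i < n := hi
    have hj' : j < n := hj
    rw [hget i hi', hget j hj'] at hij
    have := (List.nodup_iff_injective_get.mp hnodup) hij
    simpa using congrArg Fin.val this
  -- strict triple condition
  have hne_p₀ : ∀ t, 1 ≤ t → t < n → σ t ≠ p₀ := fun t h1 ht =>
    Finset.ne_of_mem_erase (hmemS' t h1 ht).1
  have hσS : ∀ t, t < n → σ t ∈ S := by
    intro t ht
    rcases Nat.eq_zero_or_pos t with rfl | h1
    · rw [hσ0]; exact hp₀S
    · exact Finset.mem_of_mem_erase (hmemS' t h1 ht).1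
  have htri : ∀ i j k, i < j → j < k → k < n → 0 < cross (σ j - σ i) (σ k - σ i) := by
    intro i j k hij hjk hk
    rcases Nat.eq_zero_or_pos i with rfl | hi1
    · rw [hσ0]
      exact hcrossp j k hij hjk hk
    · -- i ≥ 1 : use convex position via the triangle lemma
      by_contra hcon
      push_neg at hcon
      set A := p₀
      set B := σ i
      set C := σ k
      set P := σ j
      have hΔ : 0 < cross (B - A) (C - A) := hcrossp i k hi1 (lt_trans hij hjk) hk
      have h1 : 0 ≤ cross (B - A) (P - A) := by
        have : 0 < cross (σ i - p₀) (σ j - p₀) := hcrossp i j hi1 hij (by omega)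
        exact le_of_lt this
      have h2 : 0 ≤ cross (C - B) (P - B) := by
        have : cross (C - B) (P - B) = - cross (P - B) (C - B) := cross_antisymm _ _
        rw [this]
        linarith [hcon]
      have h3 : 0 ≤ cross (A - C) (P - C) := by
        have e1 : cross (P - A) (C - A) = cross (C - P) (A - P) := cross_rot A P C
        have e2 : cross (C - P) (A - P) = cross (A - C) (P - C) := cross_rot P C A
        have : 0 < cross (σ j - p₀) (σ k - p₀) := hcrossp j k (by omega) hjk hk
        rw [← e2, ← e1]
        exact le_of_lt this
      have hPmem := mem_convexHull_triangle A B C P hΔ h1 h2 h3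
      have hsub : ({A, B, C} : Set ℂ) ⊆ (S : Set ℂ) \ {P} := by
        intro z hz
        have hPj : P = σ j := rfl
        have hPne0 : P ≠ A := by
          rw [hPj]
          exact hne_p₀ j (by omega) (by omega)
        have hPneB : P ≠ B := fun h => (by omega : j ≠ i) (hinjOn
          (by exact (by omega : j < n)) (by exact (by omega : i < n)) h)
        have hPneC : P ≠ C := fun h => (by omega : j ≠ k) (hinjOn
          (by exact (by omega : j < n)) (by exact hk) h)
        rcases hz with rfl | rfl | rfl
        · exact ⟨hp₀S, by simpa using (Ne.symm hPne0)⟩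
        · exact ⟨hσS i (by omega), by simpa using (Ne.symm hPneB)⟩
        · exact ⟨hσS k hk, by simpa using (Ne.symm hPneC)⟩
      exact hconv P (hσS j (by omega)) (convexHull_mono hsub hPmem)
  exact ⟨σ, himage, hinjOn, htri⟩

lemma edge_of_triple (σ : ℕ → ℂ) (n : ℕ) (hn2 : 2 ≤ n)
    (htri : ∀ i j k, i < j → j < k → k < n → 0 < cross (σ j - σ i) (σ k - σ i)) :
    ∀ t < n, ∀ u < n, 0 ≤ cross (σ ((t+1) % n) - σ t) (σ u - σ t) := by
  intro t ht u hu
  by_cases htn : t + 1 < n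
  · have hmod : (t+1) % n = t + 1 := Nat.mod_eq_of_lt htn
    rw [hmod]
    rcases lt_trichotomy u t with hut | rfl | htu
    · have h := htri u t (t+1) hut (by omega) htn
      rw [cross_rot (σ u) (σ t) (σ (t+1))] at h
      exact le_of_lt h
    · rw [sub_self, cross_zero_right]
    · rcases eq_or_lt_of_le (Nat.succ_le_of_lt htu) with heq | hlt
      · have heq' : t + 1 = u := heq
        rw [← heq']
        rw [cross_vv]
      · exact le_of_lt (htri t (t+1) u (by omega) hlt hu)
  · have hmod : (t+1) % n = 0 := by
      have h1 : t + 1 = n := by omega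
      rw [h1, Nat.mod_self]
    rw [hmod]
    rcases Nat.eq_zero_or_pos u with rfl | hu1
    · rw [cross_vv]
    · rcases eq_or_lt_of_le (by omega : u + 1 ≤ n) with heq | hlt
      · have : u = t := by omega
        rw [this, sub_self, cross_zero_right]
      · have h := htri 0 u t hu1 (by omega) ht
        rw [cross_rot (σ 0) (σ u) (σ t), cross_rot (σ u) (σ t) (σ 0)] at h
        exact le_of_lt h

lemma mod_sub_of_lt (x n : ℕ) (h1 : n ≤ x) (h2 : x < 2*n) : x % n = x - n := by
  rw [Nat.mod_eq_sub_mod h1]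
  exact Nat.mod_eq_of_lt (by omega)

lemma rotate_triple (σ : ℕ → ℂ) (n a₀ : ℕ) (ha₀ : a₀ < n)
    (htri : ∀ i j k, i < j → j < k → k < n → 0 < cross (σ j - σ i) (σ k - σ i)) :
    ∀ i j k, i < j → j < k → k < n →
      0 < cross (σ ((j + a₀) % n) - σ ((i + a₀) % n)) (σ ((k + a₀) % n) - σ ((i + a₀) % n)) := by
  intro i j k hij hjk hk
  have hn : 0 < n := by omega
  set i' := (i + a₀) % n with hi'
  set j' := (j + a₀) % n with hj'
  set k' := (k + a₀) % n with hk'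
  by_cases hwk : k + a₀ < n
  · -- none wrap
    have e1 : i' = i + a₀ := by rw [hi']; exact Nat.mod_eq_of_lt (by omega)
    have e2 : j' = j + a₀ := by rw [hj']; exact Nat.mod_eq_of_lt (by omega)
    have e3 : k' = k + a₀ := by rw [hk']; exact Nat.mod_eq_of_lt (by omega)
    exact htri i' j' k' (by omega) (by omega) (by omega)
  · by_cases hwj : j + a₀ < n
    · -- only k wraps : k' < i' < j'
      have e1 : i' = i + a₀ := by rw [hi']; exact Nat.mod_eq_of_lt (by omega)
      have e2 : j' = j + a₀ := by rw [hj']; exact Nat.mod_eq_of_lt (by omega)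
      have e3 : k' = k + a₀ - n := by
        rw [hk']; exact mod_sub_of_lt _ _ (by omega) (by omega)
      have h := htri k' i' j' (by omega) (by omega) (by omega)
      rw [cross_rot (σ k') (σ i') (σ j')] at h
      exact h
    · by_cases hwi : i + a₀ < n
      · -- j and k wrap : j' < k' < i'
        have e1 : i' = i + a₀ := by rw [hi']; exact Nat.mod_eq_of_lt (by omega)
        have e2 : j' = j + a₀ - n := by
          rw [hj']; exact mod_sub_of_lt _ _ (by omega) (by omega)
        have e3 : k' = k + a₀ - n := by
          rw [hk']; exact mod_sub_of_lt _ _ (by omega) (by omega)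
        have h := htri j' k' i' (by omega) (by omega) (by omega)
        rw [cross_rot (σ j') (σ k') (σ i'), cross_rot (σ k') (σ i') (σ j')] at h
        exact h
      · -- all wrap
        have e1 : i' = i + a₀ - n := by
          rw [hi']; exact mod_sub_of_lt _ _ (by omega) (by omega)
        have e2 : j' = j + a₀ - n := by
          rw [hj']; exact mod_sub_of_lt _ _ (by omega) (by omega)
        have e3 : k' = k + a₀ - n := by
          rw [hk']; exact mod_sub_of_lt _ _ (by omega) (by omega)
        exact htri i' j' k' (by omega) (by omega) (by omega)

lemma rotate_image (σ : ℕ → ℂ) (n a₀ : ℕ) (ha₀ : a₀ < n) :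
    (fun t => σ ((t + a₀) % n)) '' (Set.Iio n) = σ '' (Set.Iio n) := by
  have hn : 0 < n := by omega
  ext z
  constructor
  · rintro ⟨t, ht, rfl⟩
    exact ⟨(t + a₀) % n, Nat.mod_lt _ hn, rfl⟩
  · rintro ⟨s, hs, rfl⟩
    have hs' : s < n := hs
    refine ⟨(s + n - a₀) % n, Nat.mod_lt _ hn, ?_⟩
    simp only
    congr 1
    rw [Nat.mod_add_mod]
    have h1 : s + n - a₀ + a₀ = s + n := by omega
    rw [h1, Nat.add_mod_right]
    exact Nat.mod_eq_of_lt hs'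

lemma rotate_injOn (σ : ℕ → ℂ) (n a₀ : ℕ) (ha₀ : a₀ < n)
    (hinj : Set.InjOn σ (Set.Iio n)) :
    Set.InjOn (fun t => σ ((t + a₀) % n)) (Set.Iio n) := by
  have hn : 0 < n := by omega
  intro t ht t' ht' h
  have ht1 : (t + a₀) % n < n := Nat.mod_lt _ hn
  have ht2 : (t' + a₀) % n < n := Nat.mod_lt _ hn
  have heq : (t + a₀) % n = (t' + a₀) % n := hinj ht1 ht2 h
  have hmodeq : (t + a₀) % n = (t' + a₀) % n := heq
  have : t % n = t' % n := by
    have h2 : Nat.ModEq n (t + a₀) (t' + a₀) := hmodeq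
    exact Nat.ModEq.add_right_cancel' a₀ h2
  have htn : t < n := ht
  have ht'n : t' < n := ht'
  rwa [Nat.mod_eq_of_lt htn, Nat.mod_eq_of_lt ht'n] at this

lemma continuous_sup_min (s : Finset ℂ) (hs : s.Nonempty) :
    Continuous (fun c : ℂ × ℂ => s.sup' hs (fun p => min (dist p c.1) (dist p c.2))) := by
  induction hs using Finset.Nonempty.cons_induction with
  | singleton a =>
      simp only [Finset.sup'_singleton]
      exact ((continuous_const.dist continuous_fst).min
        (continuous_const.dist continuous_snd))
  | cons a s h hs ih =>
      have : (fun c : ℂ × ℂ => (Finset.cons a s h).sup' (Finset.cons_nonempty h)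
          (fun p => min (dist p c.1) (dist p c.2))) =
          fun c : ℂ × ℂ => max (min (dist a c.1) (dist a c.2))
            (s.sup' hs (fun p => min (dist p c.1) (dist p c.2))) := by
        funext c
        rw [Finset.sup'_cons hs]
      rw [this]
      exact ((continuous_const.dist continuous_fst).min
        (continuous_const.dist continuous_snd)).max ih

lemma exists_opt (S : Finset ℂ) (hS : S.Nonempty) :
    ∃ (r : ℝ) (c₁ c₂ : ℂ), (∀ p ∈ S, dist p c₁ ≤ r ∨ dist p c₂ ≤ r) ∧
      (∀ (r' : ℝ) (c₁' c₂' : ℂ), (∀ p ∈ S, dist p c₁' ≤ r' ∨ dist p c₂' ≤ r') → r ≤ r') := by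
  classical
  set F : ℂ × ℂ → ℝ := fun c => S.sup' hS (fun p => min (dist p c.1) (dist p c.2)) with hF
  have hFc : Continuous F := continuous_sup_min S hS
  obtain ⟨p₀, hp₀⟩ := hS.exists_mem
  set x₀ : ℝ := S.sup' hS (fun p => dist p p₀) with hx₀def
  have hx₀ : ∀ p ∈ S, dist p p₀ ≤ x₀ := by
    intro p hp
    rw [hx₀def]
    exact Finset.le_sup' (fun q => dist q p₀) hp
  have hx₀0 : 0 ≤ x₀ := le_trans dist_nonneg (hx₀ p₀ hp₀)
  have hFp₀ : F (p₀, p₀) = x₀ := by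
    simp only [hF, hx₀def, min_self]
  set R : ℝ := 2 * x₀ with hR
  set K : Set (ℂ × ℂ) := (closedBall p₀ R) ×ˢ (closedBall p₀ R) with hK
  have hcpt : IsCompact K := (isCompact_closedBall _ _).prod (isCompact_closedBall _ _)
  have hmemp₀ : (p₀, p₀) ∈ K := by
    constructor <;> (simp only [mem_closedBall, dist_self]; positivity)
  obtain ⟨c, hcK, hcmin⟩ := hcpt.exists_isMinOn ⟨(p₀, p₀), hmemp₀⟩ hFc.continuousOn
  refine ⟨F c, c.1, c.2, ?_, ?_⟩
  · intro p hp
    have : min (dist p c.1) (dist p c.2) ≤ F c := by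
      rw [hF]
      exact Finset.le_sup' (fun q => min (dist q c.1) (dist q c.2)) hp
    rcases min_le_iff.mp this with h | h
    · exact Or.inl h
    · exact Or.inr h
  · intro r' c₁' c₂' hcov
    by_cases hbig : x₀ ≤ r'
    · calc F c ≤ F (p₀, p₀) := hcmin hmemp₀
        _ = x₀ := hFp₀
        _ ≤ r' := hbig
    · push_neg at hbig
      set d₁ : ℂ := if ∃ p ∈ S, dist p c₁' ≤ r' then c₁' else p₀ with hd₁
      set d₂ : ℂ := if ∃ p ∈ S, dist p c₂' ≤ r' then c₂' else p₀ with hd₂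
      have hd₁K : d₁ ∈ closedBall p₀ R := by
        rw [hd₁]
        split_ifs with h
        · obtain ⟨p, hp, hdp⟩ := h
          rw [mem_closedBall, hR]
          calc dist c₁' p₀ ≤ dist c₁' p + dist p p₀ := dist_triangle _ _ _
            _ ≤ r' + x₀ := by
                rw [dist_comm c₁' p]
                exact add_le_add hdp (hx₀ p hp)
            _ ≤ 2 * x₀ := by linarith
        · simp only [mem_closedBall, dist_self]; positivity
      have hd₂K : d₂ ∈ closedBall p₀ R := by
        rw [hd₂]
        split_ifs with h
        · obtain ⟨p, hp, hdp⟩ := h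
          rw [mem_closedBall, hR]
          calc dist c₂' p₀ ≤ dist c₂' p + dist p p₀ := dist_triangle _ _ _
            _ ≤ r' + x₀ := by
                rw [dist_comm c₂' p]
                exact add_le_add hdp (hx₀ p hp)
            _ ≤ 2 * x₀ := by linarith
        · simp only [mem_closedBall, dist_self]; positivity
      have hcov' : ∀ p ∈ S, dist p d₁ ≤ r' ∨ dist p d₂ ≤ r' := by
        intro p hp
        rcases hcov p hp with h | h
        · left
          rw [hd₁, if_pos ⟨p, hp, h⟩]
          exact h
        · right
          rw [hd₂, if_pos ⟨p, hp, h⟩]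
          exact h
      have hFd : F (d₁, d₂) ≤ r' := by
        rw [hF]
        apply Finset.sup'_le
        intro p hp
        rcases hcov' p hp with h | h
        · exact le_trans (min_le_left _ _) h
        · exact le_trans (min_le_right _ _) h
      calc F c ≤ F (d₁, d₂) := hcmin ⟨hd₁K, hd₂K⟩
        _ ≤ r' := hFd

lemma exists_boundary (n : ℕ) (hn : 0 < n) (T : Finset ℕ) (hTsub : T ⊆ Finset.range n)
    (hne : T.Nonempty) (hnall : T ≠ Finset.range n) :
    ∃ a ∈ T, (a + (n-1)) % n ∉ T := by
  by_contra hc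
  push_neg at hc
  obtain ⟨t₀, ht₀⟩ := hne
  have ht₀n : t₀ < n := Finset.mem_range.mp (hTsub ht₀)
  have key : ∀ j, (t₀ + j*(n-1)) % n ∈ T := by
    intro j
    induction j with
    | zero => simpa [Nat.mod_eq_of_lt ht₀n] using ht₀
    | succ j ih =>
        have h2 := hc _ ih
        have h3 : ((t₀ + j*(n-1)) % n + (n-1)) % n = (t₀ + (j+1)*(n-1)) % n := by
          rw [Nat.mod_add_mod]
          congr 1
          ring
        rwa [h3] at h2
  apply hnall
  apply Finset.Subset.antisymm hTsub
  intro t htr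
  have ht : t < n := Finset.mem_range.mp htr
  obtain ⟨u, hu⟩ : ∃ u, n = t + u + 1 := ⟨n - t - 1, by omega⟩
  have hval : (t₀ + (t₀ + n - t)*(n-1)) % n = t := by
    have h1 : t₀ + n - t = t₀ + u + 1 := by omega
    have h2 : n - 1 = t + u := by omega
    rw [h1, h2]
    have h3 : t₀ + (t₀ + u + 1) * (t + u) = n * (t₀ + u) + t := by
      rw [hu]; ring
    rw [h3, Nat.mul_add_mod, Nat.mod_eq_of_lt ht]
  have hfin := key (t₀ + n - t)
  rwa [hval] at hfin

/-- For a finite set `S` of `n ≥ 2` points in convex position, there is an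
optimal solution of the 2-center problem on `S` (two congruent closed disks of minimum
radius `r` covering `S`) in which the points assigned to the first disk form a contiguous
interval in the counterclockwise cyclic order of the vertices of the convex hull of `S`. -/
theorem two_center_convex_position_contiguous (S : Finset ℂ) (n : ℕ) (hn : n = S.card)
    (hn2 : 2 ≤ n)
    (hconv : ∀ p ∈ S, p ∉ convexHull ℝ ((S : Set ℂ) \ {p})) :
    ∃ (r : ℝ) (c₁ c₂ : ℂ),
      (∀ p ∈ S, dist p c₁ ≤ r ∨ dist p c₂ ≤ r) ∧
      (∀ (r' : ℝ) (c₁' c₂' : ℂ), (∀ p ∈ S, dist p c₁' ≤ r' ∨ dist p c₂' ≤ r') → r ≤ r') ∧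
      ∃ σ : ℕ → ℂ,
        (S : Set ℂ) = σ '' (Set.Iio n) ∧ Set.InjOn σ (Set.Iio n) ∧
        (∀ t < n, ∀ p ∈ S, 0 ≤ cross (σ ((t + 1) % n) - σ t) (p - σ t)) ∧
        ∃ a len : ℕ, len ≤ n ∧
          (∀ s < len, dist (σ ((a + s) % n)) c₁ ≤ r) ∧
          (∀ t < n, (¬ ∃ s < len, (a + s) % n = t) → dist (σ t) c₂ ≤ r) := by
  classical
  have hn0 : 0 < n := by omega
  have hS : S.Nonempty := by rw [← Finset.card_pos, ← hn]; omega
  obtain ⟨r, c₁, c₂, hcov, hmin⟩ := exists_opt S hS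
  obtain ⟨σ, himg, hinj, htri⟩ := exists_ccw S n hn hn2 hconv
  refine ⟨r, c₁, c₂, hcov, hmin, ?_⟩
  set T : Finset ℕ := (Finset.range n).filter
    (fun t => dist (σ t) c₁ ≤ dist (σ t) c₂) with hT
  have hTsub : T ⊆ Finset.range n := Finset.filter_subset _ _
  obtain ⟨a₀, ha₀n, ha₀⟩ : ∃ a₀, a₀ < n ∧
      (T.Nonempty → T ≠ Finset.range n → (a₀ ∈ T ∧ (a₀ + (n-1)) % n ∉ T)) := by
    by_cases h1 : T.Nonempty
    · by_cases h2 : T = Finset.range n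
      · exact ⟨0, hn0, fun _ h => absurd h2 h⟩
      · obtain ⟨a, haT, hpred⟩ := exists_boundary n hn0 T hTsub h1 h2
        exact ⟨a, Finset.mem_range.mp (hTsub haT), fun _ _ => ⟨haT, hpred⟩⟩
    · exact ⟨0, hn0, fun h => absurd h h1⟩
  set τ : ℕ → ℂ := fun t => σ ((t + a₀) % n) with hτ
  have himgτ : (S : Set ℂ) = τ '' Set.Iio n := by
    rw [himg]; exact (rotate_image σ n a₀ ha₀n).symm
  have hinjτ := rotate_injOn σ n a₀ ha₀n hinj
  have htriτ := rotate_triple σ n a₀ ha₀n htri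
  have hedgeτ := edge_of_triple τ n hn2 (by
    intro i j k hij hjk hk
    exact htriτ i j k hij hjk hk)
  have hτS : ∀ t, t < n → τ t ∈ S := by
    intro t ht
    have : τ t ∈ τ '' Set.Iio n := ⟨t, ht, rfl⟩
    rw [← himgτ] at this
    exact_mod_cast this
  refine ⟨τ, himgτ, hinjτ, ?_, ?_⟩
  · intro t ht p hp
    have : p ∈ τ '' Set.Iio n := by rw [← himgτ]; exact_mod_cast hp
    obtain ⟨u, hu, rfl⟩ := this
    exact hedgeτ t ht u hu
  · set T' : Finset ℕ := (Finset.range n).filter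
      (fun t => dist (τ t) c₁ ≤ dist (τ t) c₂) with hT'
    have hmemT' : ∀ t, t ∈ T' ↔ (t < n ∧ dist (τ t) c₁ ≤ dist (τ t) c₂) := by
      intro t
      rw [hT', Finset.mem_filter, Finset.mem_range]
    have hmemT : ∀ t, t ∈ T ↔ (t < n ∧ dist (σ t) c₁ ≤ dist (σ t) c₂) := by
      intro t
      rw [hT, Finset.mem_filter, Finset.mem_range]
    set len := T'.card with hlendef
    have hlenle : len ≤ n := by
      rw [hlendef]
      calc T'.card ≤ (Finset.range n).card := Finset.card_le_card (Finset.filter_subset _ _)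
        _ = n := Finset.card_range n
    -- relating T' to T
    have hQT : ∀ t, t < n → (t ∈ T' ↔ (t + a₀) % n ∈ T) := by
      intro t ht
      rw [hmemT', hmemT]
      have h1 : (t + a₀) % n < n := Nat.mod_lt _ hn0
      constructor
      · rintro ⟨-, h⟩; exact ⟨h1, h⟩
      · rintro ⟨-, h⟩; exact ⟨ht, h⟩
    have hrun : ∀ s, s < len → s ∈ T' := by
      intro s
      induction s using Nat.strong_induction_on with
      | _ s ih =>
        intro hs
        have hsn : s < n := lt_of_lt_of_le hs hlenle
        have hTne : T.Nonempty := by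
          have hT'ne : T'.Nonempty := Finset.card_pos.mp (by omega)
          obtain ⟨t, htT'⟩ := hT'ne
          have htn : t < n := (Finset.mem_range.mp (Finset.filter_subset _ _ htT'))
          exact ⟨(t + a₀) % n, (hQT t htn).mp htT'⟩
        by_cases hTall : T = Finset.range n
        · -- every index is in T', directly
          apply (hQT s hsn).mpr
          rw [hTall, Finset.mem_range]
          exact Nat.mod_lt _ hn0
        · obtain ⟨ha₀T, hpred⟩ := ha₀ hTne hTall
          rcases Nat.eq_zero_or_pos s with rfl | hs1
          · apply (hQT 0 hn0).mpr
            have : (0 + a₀) % n = a₀ := by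
              rw [Nat.zero_add, Nat.mod_eq_of_lt ha₀n]
            rwa [this]
          · by_contra hsnot
            -- find b ∈ T' with b > s
            have hbex : ∃ b ∈ T', b ∉ Finset.range (s+1) := by
              by_contra hb
              push_neg at hb
              have hsub2 : T' ⊆ (Finset.range (s+1)).erase s := by
                intro x hx
                rcases eq_or_ne x s with rfl | hne
                · exact absurd hx hsnot
                · exact Finset.mem_erase.mpr ⟨hne, hb x hx⟩
              have := Finset.card_le_card hsub2
              rw [Finset.card_erase_of_mem (by simp), Finset.card_range] at this
              omega
            obtain ⟨b, hbT', hbr⟩ := hbex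
            have hbn : b < n := (Finset.mem_range.mp (Finset.filter_subset _ _ hbT'))
            have hsb : s < b := by
              rw [Finset.mem_range] at hbr
              omega
            have hn1T' : (n-1) ∉ T' := by
              intro hmem
              apply hpred
              have := (hQT (n-1) (by omega)).mp hmem
              rwa [Nat.add_comm (n-1) a₀] at this
            have hbn1 : b < n - 1 := by
              rcases eq_or_ne b (n-1) with rfl | hne
              · exact absurd hbT' hn1T'
              · omega
            -- alternation: 0 < s < b < n-1, pattern (≤, >, ≤, >)
            have hQ0 : dist (τ 0) c₁ ≤ dist (τ 0) c₂ :=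
              ((hmemT' 0).mp (ih 0 hs1 (by omega))).2
            have hQb : dist (τ b) c₁ ≤ dist (τ b) c₂ := ((hmemT' b).mp hbT').2
            have hQs : dist (τ s) c₂ < dist (τ s) c₁ := by
              rcases lt_or_ge (dist (τ s) c₂) (dist (τ s) c₁) with h | h
              · exact h
              · exact absurd ((hmemT' s).mpr ⟨hsn, h⟩) hsnot
            have hQn1 : dist (τ (n-1)) c₂ < dist (τ (n-1)) c₁ := by
              rcases lt_or_ge (dist (τ (n-1)) c₂) (dist (τ (n-1)) c₁) with h | h
              · exact h
              · exact absurd ((hmemT' (n-1)).mpr ⟨by omega, h⟩) hn1T'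
            exact core_lemma (τ 0) (τ s) (τ b) (τ (n-1)) c₁ c₂
              (htriτ 0 s b hs1 hsb hbn)
              (htriτ 0 s (n-1) hs1 (by omega) (by omega))
              (htriτ 0 b (n-1) (by omega) (by omega) (by omega))
              (htriτ s b (n-1) hsb (by omega) (by omega))
              hQ0 hQb hQs hQn1
    have hT'eq : T' = Finset.range len := by
      symm
      apply Finset.eq_of_subset_of_card_le
      · intro s hs
        exact hrun s (Finset.mem_range.mp hs)
      · rw [Finset.card_range]
    refine ⟨0, len, hlenle, ?_, ?_⟩
    · intro s hs
      have hsn : s < n := lt_of_lt_of_le hs hlenle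
      have hmod : (0 + s) % n = s := by
        rw [Nat.zero_add, Nat.mod_eq_of_lt hsn]
      rw [hmod]
      have hQs := ((hmemT' s).mp (hrun s hs)).2
      rcases hcov (τ s) (hτS s hsn) with h | h
      · exact h
      · exact le_trans hQs h
    · intro t htn hnot
      have htT' : t ∉ T' := by
        rw [hT'eq, Finset.mem_range]
        intro hl
        exact hnot ⟨t, hl, by rw [Nat.zero_add, Nat.mod_eq_of_lt htn]⟩
      have hQt : dist (τ t) c₂ < dist (τ t) c₁ := by
        rcases lt_or_ge (dist (τ t) c₂) (dist (τ t) c₁) with h | h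
        · exact h
        · exact absurd ((hmemT' t).mpr ⟨htn, h⟩) htT'
      rcases hcov (τ t) (hτS t htn) with h | h
      · exact le_trans hQt.le h
      · exact h
end
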